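/- arXiv:2207.00373 — 9 statements merged into one kernel-verified Lean document; each statement's English description precedes it below -/
import Mathlib

section
/- Consider linear dynamics f(x,u) = Ax + Bu with A ∈ ℝ^{n×n}, B ∈ ℝ^{n×m} and constraint set Y = {(x,u) ∈ ℝⁿ × ℝᵐ : g(x,u) ≤ 0 componentwise} for a convex function g : ℝⁿ × ℝᵐ → ℝᵖ. Let ℓ : ℝⁿ × ℝᵐ → ℝ be a stage cost and assume there is a strictly convex function ℓ̂ with ℓ̂ ≤ ℓ on Y and ℓ̂(xᵉ,uᵉ) = ℓ(xᵉ,uᵉ), where (xᵉ,uᵉ) ∈ Y is the strictly globally optimal equilibrium of ℓ̂ (i.e. the global minimum of min_{(x,u)∈Y} ℓ̂(x,u) subject to x − Ax − Bu = 0, with ℓ̂(xᵉ,uᵉ) < ℓ̂(x,u) for every equilibrium (x,u) ∈ Y with x ≠ xᵉ). Assume further the Slater condition: there exists (x̂,û) ∈ ℝⁿ × ℝᵐ with g(x̂,û) < 0 componentwise and x̂ − Ax̂ − Bû = 0. Then there exists ν ∈ ℝⁿ such that the system is strictly pre-dissipative for the stage cost ℓ at (xᵉ,uᵉ) with the linear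 storage function λ(x) = νᵀx. -/
open Set Bornology Matrix Filter

/-- `Vec n` is `ℝⁿ`. -/
abbrev Vec (n : ℕ) : Type := Fin n → ℝ

/-- A class `K∞` comparison function. -/
def KInf (α : ℝ → ℝ) : Prop :=
  ContinuousOn α (Ici 0) ∧ StrictMonoOn α (Ici 0) ∧ α 0 = 0 ∧
  (∀ r ∈ Ici (0 : ℝ), 0 ≤ α r) ∧ ∀ M : ℝ, ∃ r ∈ Ici (0 : ℝ), M < α r

/-- The induced state constraint set `X = {x | ∃ u, (x,u) ∈ Y}`. -/
def stateSet {n m : ℕ} (Y : Set (Vec n × Vec m)) : Set (Vec n) := {x | ∃ u, (x, u) ∈ Y}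

/-- `lam` is bounded on bounded subsets of `X`. -/
def BddOnBddSubsets {n : ℕ} (X : Set (Vec n)) (lam : Vec n → ℝ) : Prop :=
  ∀ S ⊆ X, IsBounded S → IsBounded (lam '' S)

/-- The strict dissipation inequality with supply rate `ℓ(x,u) - ℓ(xᵉ,uᵉ)`. -/
def DissIneq {n m : ℕ} (f : Vec n × Vec m → Vec n) (Y : Set (Vec n × Vec m))
    (ℓ : Vec n × Vec m → ℝ) (xe : Vec n) (ue : Vec m) (lam : Vec n → ℝ) (α : ℝ → ℝ) : Prop :=
  ∀ z ∈ Y, f z ∈ stateSet Y →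
    ℓ z - ℓ (xe, ue) + lam z.1 - lam (f z) ≥ α ‖z.1 - xe‖

/-- Strict pre-dissipativity with a given storage function and `K∞` bound. -/
def StrictPreDissipativeWith {n m : ℕ} (f : Vec n × Vec m → Vec n) (Y : Set (Vec n × Vec m))
    (ℓ : Vec n × Vec m → ℝ) (xe : Vec n) (ue : Vec m) (lam : Vec n → ℝ) (α : ℝ → ℝ) : Prop :=
  (xe, ue) ∈ Y ∧ f (xe, ue) = xe ∧ BddOnBddSubsets (stateSet Y) lam ∧ KInf α ∧
    DissIneq f Y ℓ xe ue lam α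

/-- Strict dissipativity with a given storage function and `K∞` bound. -/
def StrictDissipativeWith {n m : ℕ} (f : Vec n × Vec m → Vec n) (Y : Set (Vec n × Vec m))
    (ℓ : Vec n × Vec m → ℝ) (xe : Vec n) (ue : Vec m) (lam : Vec n → ℝ) (α : ℝ → ℝ) : Prop :=
  StrictPreDissipativeWith f Y ℓ xe ue lam α ∧ BddBelow (lam '' stateSet Y)

/-- Strict dissipativity at an equilibrium. -/
def StrictDissipative {n m : ℕ} (f : Vec n × Vec m → Vec n) (Y : Set (Vec n × Vec m))
    (ℓ : Vec n × Vec m → ℝ) (xe : Vec n) (ue : Vec m) : Prop :=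
  ∃ lam α, StrictDissipativeWith f Y ℓ xe ue lam α


section Helpers

variable {E F : Type*} [NormedAddCommGroup E] [NormedSpace ℝ E] [FiniteDimensional ℝ E]
  [NormedAddCommGroup F] [NormedSpace ℝ F] [FiniteDimensional ℝ F]

/-- Lagrange multiplier existence for an affine equality constraint under a Slater-type
interior condition. -/
theorem exists_multiplier (L : E →L[ℝ] F) (Y : Set E) (hYconv : Convex ℝ Y)
    (h : E → ℝ) (hconv : ConvexOn ℝ univ h) (hcont : Continuous h)
    (hmin : ∀ z ∈ Y, L z = 0 → 0 ≤ h z)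
    (zhat : E) (hzhat : zhat ∈ interior Y) (hLzhat : L zhat = 0) :
    ∃ φ : F →L[ℝ] ℝ, ∀ z ∈ Y, 0 ≤ h z + φ (L z) := by
  classical
  -- range of L and a complement
  set W : Submodule ℝ F := LinearMap.range (L : E →ₗ[ℝ] F) with hW
  obtain ⟨W', hcompl⟩ := Submodule.exists_isCompl W
  -- the convex set C
  set C : Set (F × ℝ) :=
    {q | ∃ z ∈ Y, ∃ v ∈ W', q.1 = L z + v ∧ h z < q.2} with hC
  have hCconv : Convex ℝ C := by
    rintro ⟨y₁, t₁⟩ ⟨z₁, hz₁, v₁, hv₁, rfl, ht₁⟩ ⟨y₂, t₂⟩ ⟨z₂, hz₂, v₂, hv₂, rfl, ht₂⟩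
      a b ha hb hab
    refine ⟨a • z₁ + b • z₂, hYconv hz₁ hz₂ ha hb hab, a • v₁ + b • v₂,
      W'.add_mem (W'.smul_mem _ hv₁) (W'.smul_mem _ hv₂), ?_, ?_⟩
    · simp [Prod.smul_def, map_add, _root_.map_smul, smul_add]
      abel
    · calc h (a • z₁ + b • z₂) ≤ a * h z₁ + b * h z₂ :=
            hconv.2 (mem_univ _) (mem_univ _) ha hb hab
        _ < a * t₁ + b * t₂ := by
            rcases eq_or_lt_of_le ha with rfl | ha'
            · simp at hab; subst hab; simpa using (by nlinarith : (0:ℝ)*h z₁ + 1*h z₂ < 0*t₁+1*t₂)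
            · rcases eq_or_lt_of_le hb with rfl | hb'
              · simp at hab; subst hab; nlinarith
              · have := mul_lt_mul_of_pos_left ht₁ ha'
                have := mul_lt_mul_of_pos_left ht₂ hb'
                nlinarith
        _ = a • t₁ + b • t₂ := by simp [smul_eq_mul]
  -- (0,0) ∉ C
  have h00 : ((0 : F), (0 : ℝ)) ∉ C := by
    rintro ⟨z, hz, v, hv, hyv, ht⟩
    have hvW : v ∈ W := by
      have : v = -(L z) := by
        have h0 : (0 : F) = L z + v := hyv
        linear_combination (norm := module) -h0
      rw [this]
      exact W.neg_mem ⟨z, rfl⟩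
    have hv0 : v = 0 := by
      have := hcompl.inf_eq_bot
      have : v ∈ W ⊓ W' := ⟨hvW, hv⟩
      simpa [hcompl.inf_eq_bot] using this
    have hLz : L z = 0 := by
      have h0 : (0 : F) = L z + v := hyv
      rw [hv0] at h0; simpa using h0.symm
    exact absurd ht (not_lt.2 (hmin z hz hLz))
  -- an open box inside C
  obtain ⟨δ, hδpos, hball⟩ := Metric.isOpen_iff.1 isOpen_interior zhat hzhat
  have hballY : Metric.ball zhat (δ/2) ⊆ Y :=
    (Metric.ball_subset_ball (by linarith)).trans (hball.trans interior_subset)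
  -- bound of h on the closed ball
  obtain ⟨M, hM⟩ : ∃ M, ∀ w ∈ Metric.closedBall zhat (δ/2), h w ≤ M := by
    obtain ⟨w₀, -, hw₀⟩ := (isCompact_closedBall zhat (δ/2)).exists_isMaxOn
      ⟨zhat, Metric.mem_closedBall_self (by positivity)⟩ (hcont.continuousOn)
    exact ⟨h w₀, fun w hw => hw₀ hw⟩
  -- L as a surjective map onto its range
  let L' : E →L[ℝ] W :=
    { toLinearMap := (L : E →ₗ[ℝ] F).rangeRestrict,
      cont := by
        apply LinearMap.continuous_of_finiteDimensional }
  have hL'surj : Function.Surjective L' := LinearMap.surjective_rangeRestrict _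
  have hopen : IsOpenMap L' := ContinuousLinearMap.isOpenMap L' hL'surj
  -- the projection onto W along W'
  let pr : F →L[ℝ] W :=
    { toLinearMap := W.linearProjOfIsCompl W' hcompl,
      cont := by apply LinearMap.continuous_of_finiteDimensional }
  set NW : Set W := L' '' Metric.ball zhat (δ/2) with hNW
  have hNWopen : IsOpen NW := hopen _ Metric.isOpen_ball
  have h0NW : (0 : W) ∈ NW := by
    refine ⟨zhat, Metric.mem_ball_self (by positivity), ?_⟩
    exact Subtype.ext hLzhat
  set U : Set (F × ℝ) := (pr ⁻¹' NW) ×ˢ Ioi M with hU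
  have hUopen : IsOpen U := (hNWopen.preimage pr.continuous).prod isOpen_Ioi
  have hUC : U ⊆ C := by
    rintro ⟨y, t⟩ ⟨hy, ht⟩
    obtain ⟨z, hzball, hzL⟩ := hy
    refine ⟨z, hballY hzball, y - L z, ?_, by abel, lt_of_le_of_lt (hM z (Metric.ball_subset_closedBall hzball)) ht⟩
    -- y - L z ∈ W'
    have hyz : pr (y - L z) = 0 := by
      have h1 : pr (L z) = L' z := by
        have hmem : (L z : F) ∈ W := ⟨z, rfl⟩
        have hkey := Submodule.linearProjOfIsCompl_apply_left (p := W) (q := W') hcompl ⟨L z, hmem⟩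
        apply Subtype.ext
        calc (pr (L z) : F) = (((W.projectionOnto W' hcompl) (L z) : W) : F) := rfl
          _ = L z := by rw [show (L z) = ((⟨L z, hmem⟩ : W) : F) from rfl, hkey]
      have h2 : pr y = L' z := hzL.symm
      rw [map_sub, h1, h2, sub_self]
    exact (Submodule.linearProjOfIsCompl_apply_eq_zero_iff hcompl).1 hyz
  have hUint : U ⊆ interior C := interior_maximal hUC hUopen
  set t₀ : ℝ := max M 0 + 1 with ht₀
  have hu₀ : ((0 : F), t₀) ∈ interior C :=
    hUint ⟨by simpa using h0NW,
      by simpa using lt_of_le_of_lt (le_max_left M 0) (lt_add_one (M ⊔ 0))⟩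
  -- separation
  obtain ⟨F₀, hF₀⟩ := geometric_hahn_banach_open_point (s := interior C)
    (hCconv.interior) isOpen_interior (fun hc => h00 (interior_subset hc))
  have hF₀0 : F₀ ((0 : F), (0 : ℝ)) = 0 := by exact map_zero F₀
  have hF₀neg : ∀ a ∈ interior C, F₀ a < 0 := by
    intro a ha; have := hF₀ a ha; rwa [hF₀0] at this
  have hFC : ∀ c ∈ C, F₀ c ≤ 0 := by
    intro c hc
    by_contra hpos
    push_neg at hpos
    have hu₀neg : F₀ ((0 : F), t₀) < 0 := hF₀neg _ hu₀
    set a : ℝ := F₀ c / (F₀ c - F₀ ((0 : F), t₀)) with ha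
    have hden : 0 < F₀ c - F₀ ((0 : F), t₀) := by linarith
    have ha0 : 0 < a := div_pos hpos hden
    have ha1 : a < 1 := (div_lt_one hden).2 (by linarith)
    have hmem : a • ((0 : F), t₀) + (1 - a) • c ∈ interior C :=
      hCconv.combo_interior_self_mem_interior hu₀ hc ha0 (by linarith) (by ring)
    have := hF₀neg _ hmem
    rw [map_add, _root_.map_smul, _root_.map_smul] at this
    have : a * F₀ ((0:F), t₀) + (1 - a) * F₀ c < 0 := by simpa [smul_eq_mul] using this
    have hzero : a * F₀ ((0:F), t₀) + (1 - a) * F₀ c = 0 := by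
      have hdiv : a * (F₀ c - F₀ ((0:F), t₀)) = F₀ c := by
        rw [ha]; exact div_mul_cancel₀ _ (ne_of_gt hden)
      linear_combination -hdiv
    linarith
  set κ : ℝ := F₀ ((0 : F), (1 : ℝ)) with hκ
  have hκneg : κ < 0 := by
    have h1 : F₀ ((0 : F), t₀) < 0 := hF₀neg _ hu₀
    have h2 : ((0 : F), t₀) = t₀ • ((0 : F), (1 : ℝ)) := by simp [Prod.smul_def]
    rw [h2, _root_.map_smul, smul_eq_mul] at h1
    have ht₀pos : 0 < t₀ := lt_of_le_of_lt (le_max_right M 0) (by linarith)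
    nlinarith
  set φ₀ : F →L[ℝ] ℝ := F₀.comp (ContinuousLinearMap.inl ℝ F ℝ) with hφ₀
  refine ⟨κ⁻¹ • φ₀, ?_⟩
  intro z hz
  have hkey : φ₀ (L z) + h z * κ ≤ 0 := by
    have hstep : ∀ ε > (0:ℝ), φ₀ (L z) + h z * κ ≤ ε := by
      intro ε hε
      have hmem : ((L z : F), h z + ε / (-κ)) ∈ C :=
        ⟨z, hz, 0, W'.zero_mem, by simp,
          by have : 0 < ε / (-κ) := div_pos hε (by linarith); linarith⟩
      have hle := hFC _ hmem
      have hdecomp : ((L z : F), h z + ε / (-κ)) =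
          ((L z : F), (0:ℝ)) + (h z + ε / (-κ)) • ((0:F), (1:ℝ)) := by
        simp [Prod.smul_def]
      rw [hdecomp, map_add, _root_.map_smul, smul_eq_mul] at hle
      have hφLz : F₀ ((L z : F), (0:ℝ)) = φ₀ (L z) := rfl
      rw [hφLz] at hle
      have hne : κ ≠ 0 := ne_of_lt hκneg
      have hεκ : (ε / (-κ)) * κ = -ε := by
        rw [div_neg]; field_simp
      nlinarith
    exact le_of_forall_gt_imp_ge_of_dense fun ε hε => hstep ε hε
  -- divide by κ < 0
  have hκne : κ ≠ 0 := ne_of_lt hκneg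
  have : 0 ≤ κ⁻¹ * (φ₀ (L z) + h z * κ) := by
    have h1 : κ⁻¹ ≤ 0 := inv_nonpos.2 (le_of_lt hκneg)
    nlinarith [mul_nonneg (neg_nonneg.2 h1) (neg_nonneg.2 hkey)]
  have hexp : κ⁻¹ * (φ₀ (L z) + h z * κ) = κ⁻¹ * φ₀ (L z) + h z := by
    field_simp
  rw [hexp] at this
  simpa [ContinuousLinearMap.smul_apply, smul_eq_mul] using by linarith

variable {E : Type*} [NormedAddCommGroup E] [NormedSpace ℝ E] [FiniteDimensional ℝ E]

theorem ray_bound (Y : Set E) (hYconv : Convex ℝ Y) (hYclosed : IsClosed Y)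
    (lt : E → ℝ) (hcont : Continuous lt) (hconvex : ConvexOn ℝ univ lt)
    (ze : E) (hze : ze ∈ Y) (hze0 : lt ze = 0)
    (hpos : ∀ w ∈ Y, w ≠ ze → 0 < lt w)
    (ρ : ℝ) (hρ : 0 < ρ) :
    ∃ c > 0, ∀ z ∈ Y, ρ ≤ ‖z - ze‖ → c * (‖z - ze‖ / ρ) ≤ lt z := by
  classical
  set K : Set E := Y ∩ Metric.sphere ze ρ with hK
  have hkey : ∀ z ∈ Y, ρ ≤ ‖z - ze‖ →
      ∃ w ∈ K, (‖z - ze‖ / ρ) * lt w ≤ lt z := by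
    intro z hz hs
    set s : ℝ := ‖z - ze‖ with hsdef
    have hspos : 0 < s := lt_of_lt_of_le hρ hs
    set θ : ℝ := ρ / s with hθ
    have hθpos : 0 < θ := div_pos hρ hspos
    have hθle : θ ≤ 1 := (div_le_one hspos).2 hs
    set w : E := (1 - θ) • ze + θ • z with hw
    have hwY : w ∈ Y := hYconv hze hz (by linarith) (le_of_lt hθpos) (by ring)
    have hwsphere : w ∈ Metric.sphere ze ρ := by
      have : w - ze = θ • (z - ze) := by rw [hw]; module
      simp only [Metric.mem_sphere, dist_eq_norm, this, norm_smul]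
      rw [Real.norm_eq_abs, abs_of_pos hθpos, hθ]
      field_simp
      exact hsdef.symm
    refine ⟨w, ⟨hwY, hwsphere⟩, ?_⟩
    have hcomb : lt w ≤ (1 - θ) * lt ze + θ * lt z :=
      hconvex.2 (mem_univ ze) (mem_univ z) (by linarith) (le_of_lt hθpos) (by ring)
    rw [hze0] at hcomb
    have h1 : lt w ≤ θ * lt z := by linarith
    have h2 : (s / ρ) * lt w ≤ (s / ρ) * (θ * lt z) :=
      mul_le_mul_of_nonneg_left h1 (le_of_lt (div_pos hspos hρ))
    have h3 : (s / ρ) * (θ * lt z) = lt z := by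
      rw [hθ]; field_simp
    linarith
  by_cases hKne : K.Nonempty
  · have hKcompact : IsCompact K :=
      Metric.isCompact_of_isClosed_isBounded (hYclosed.inter Metric.isClosed_sphere)
        (Metric.isBounded_closedBall.subset
          (Set.inter_subset_right.trans Metric.sphere_subset_closedBall))
    obtain ⟨w₀, hw₀K, hw₀min⟩ := hKcompact.exists_isMinOn hKne hcont.continuousOn
    have hw₀ne : w₀ ≠ ze := by
      intro h
      have := hw₀K.2
      rw [h] at this
      simp [Metric.mem_sphere] at this
      linarith
    refine ⟨lt w₀, hpos w₀ hw₀K.1 hw₀ne, ?_⟩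
    intro z hz hs
    obtain ⟨w, hwK, hwle⟩ := hkey z hz hs
    have := hw₀min hwK
    have hfrac : 0 ≤ ‖z - ze‖ / ρ := div_nonneg (norm_nonneg _) (le_of_lt hρ)
    calc lt w₀ * (‖z - ze‖ / ρ) = (‖z - ze‖ / ρ) * lt w₀ := by ring
      _ ≤ (‖z - ze‖ / ρ) * lt w := mul_le_mul_of_nonneg_left this hfrac
      _ ≤ lt z := hwle
  · refine ⟨1, one_pos, fun z hz hs => ?_⟩
    obtain ⟨w, hwK, -⟩ := hkey z hz hs
    exact absurd ⟨w, hwK⟩ hKne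


theorem alpha_props (M : ℝ → ℝ) (c₂ : ℝ) (hmono : Monotone M) (h0 : ∀ t, 0 ≤ M t)
    (hub : ∀ t, M t ≤ c₂) (hc₂ : 0 < c₂) (hc₂1 : c₂ ≤ 1) (hpos : ∀ t, 0 < t → 0 < M t) :
    KInf (fun r => ∫ t in (0:ℝ)..r, M t) ∧
    (∀ t, 0 ≤ t → (∫ u in (0:ℝ)..t, M u) ≤ t * M t) ∧
    (∀ t, 0 ≤ t → (∫ u in (0:ℝ)..t, M u) ≤ t * c₂) := by
  have hint : ∀ a b : ℝ, IntervalIntegrable M MeasureTheory.volume a b := fun a b =>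
    (hmono.monotoneOn _).intervalIntegrable
  -- upper bound by a constant on [a,b]
  have hupper : ∀ a b C : ℝ, a ≤ b → (∀ x ∈ Icc a b, M x ≤ C) →
      (∫ u in a..b, M u) ≤ (b - a) * C := by
    intro a b C hab hC
    calc (∫ u in a..b, M u) ≤ ∫ _ in a..b, C :=
          intervalIntegral.integral_mono_on hab (hint a b) intervalIntegrable_const hC
      _ = (b - a) * C := by simp [intervalIntegral.integral_const, smul_eq_mul]
  have hlower : ∀ a b C : ℝ, a ≤ b → (∀ x ∈ Icc a b, C ≤ M x) →
      (b - a) * C ≤ ∫ u in a..b, M u := by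
    intro a b C hab hC
    calc (b - a) * C = ∫ _ in a..b, C := by simp [intervalIntegral.integral_const, smul_eq_mul]
      _ ≤ ∫ u in a..b, M u :=
          intervalIntegral.integral_mono_on hab intervalIntegrable_const (hint a b) hC
  set α : ℝ → ℝ := fun r => ∫ t in (0:ℝ)..r, M t with hα
  have hdiff : ∀ a b : ℝ, α b - α a = ∫ u in a..b, M u := by
    intro a b
    have := intervalIntegral.integral_add_adjacent_intervals (hint 0 a) (hint a b)
    simp only [hα]; linarith
  have hmono' : ∀ a b : ℝ, a ≤ b → α a ≤ α b := by
    intro a b hab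
    have h1 := hlower a b 0 hab (fun x _ => h0 x)
    have h2 := hdiff a b
    linarith
  have hstrict : ∀ a b : ℝ, 0 ≤ a → a < b → α a < α b := by
    intro a b ha hab
    set c : ℝ := (a + b) / 2 with hc
    have hc1 : a ≤ c := by rw [hc]; linarith
    have hc2 : c ≤ b := by rw [hc]; linarith
    have hcpos : 0 < c := by rw [hc]; linarith
    have h1 : (b - c) * M c ≤ ∫ u in c..b, M u :=
      hlower c b (M c) hc2 (fun x hx => hmono hx.1)
    have h2 : (0:ℝ) ≤ ∫ u in a..c, M u := by
      have := hlower a c 0 hc1 (fun x _ => h0 x)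
      linarith
    have h3 : 0 < (b - c) * M c := mul_pos (by linarith) (hpos c hcpos)
    have d1 := hdiff a c
    have d2 := hdiff c b
    linarith
  refine ⟨⟨?_, ?_, ?_, ?_, ?_⟩, ?_, ?_⟩
  · -- continuity: Lipschitz with constant 1
    have : LipschitzOnWith 1 α (Ici 0) := by
      apply LipschitzOnWith.of_dist_le_mul
      intro x hx y hy
      wlog hxy : y ≤ x generalizing x y
      · rw [dist_comm, dist_comm x y]; exact this y hy x hx (by linarith [not_le.1 hxy])
      have h1 : α x - α y ≤ (x - y) * 1 := by
        have := hupper y x 1 hxy (fun u _ => le_trans (hub u) hc₂1)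
        have := hdiff y x
        linarith
      have h2 : 0 ≤ α x - α y := by linarith [hmono' y x hxy]
      rw [Real.dist_eq, Real.dist_eq, abs_of_nonneg h2, abs_of_nonneg (by linarith : (0:ℝ) ≤ x - y)]
      simpa using h1
    exact this.continuousOn
  · intro x hx y hy hxy
    exact hstrict x y hx hxy
  · simp [hα]
  · intro r hr
    rcases eq_or_lt_of_le (mem_Ici.1 hr) with h | h
    · simp [hα, ← h]
    · have := hstrict 0 r le_rfl h
      simp only [hα, intervalIntegral.integral_same] at this ⊢
      linarith [this]
  · -- unbounded
    intro Mb
    set r : ℝ := 1 + (max Mb 0 + 1) / M 1 with hr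
    have hM1 : 0 < M 1 := hpos 1 one_pos
    have hrpos : (0:ℝ) ≤ r := by
      have : 0 ≤ (max Mb 0 + 1) / M 1 := by positivity
      rw [hr]; linarith
    refine ⟨r, mem_Ici.2 hrpos, ?_⟩
    have h1le : (1:ℝ) ≤ r := by
      have : 0 ≤ (max Mb 0 + 1) / M 1 := by positivity
      rw [hr]; linarith
    have h1 : (r - 1) * M 1 ≤ ∫ u in (1:ℝ)..r, M u :=
      hlower 1 r (M 1) h1le (fun x hx => hmono hx.1)
    have h2 : 0 ≤ α 1 := by
      have := hlower 0 1 0 zero_le_one (fun x _ => h0 x)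
      simpa [hα] using this
    have h3 : (r - 1) * M 1 = max Mb 0 + 1 := by
      rw [hr]; field_simp; ring
    have hd := hdiff 1 r
    have : max Mb 0 + 1 ≤ α r := by linarith
    have := le_max_left Mb 0
    linarith
  · intro t ht
    have := hupper 0 t (M t) ht (fun x hx => hmono hx.2)
    simpa using this
  · intro t ht
    have := hupper 0 t c₂ ht (fun x _ => hub x)
    simpa using this

end Helpers

/-- Proposition 2.5: for linear dynamics and a stage cost `ℓ` that is bounded
from below on `Y` by a strictly convex function `ℓ̂` touching it at the strictly globally optimal
equilibrium of `ℓ̂`, under the Slater condition the system is strictly pre-dissipative for `ℓ`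
with a linear storage function. -/
theorem stmt1 {n m p : ℕ} (A : Matrix (Fin n) (Fin n) ℝ) (B : Matrix (Fin n) (Fin m) ℝ)
    (f : Vec n × Vec m → Vec n) (hf : f = fun z => A.mulVec z.1 + B.mulVec z.2)
    (g : Vec n × Vec m → Fin p → ℝ) (Y : Set (Vec n × Vec m))
    (hY : Y = {z | ∀ i, g z i ≤ 0})
    (hg : ∀ i, ConvexOn ℝ univ fun z => g z i)
    (ℓ ℓhat : Vec n × Vec m → ℝ) (hhat : StrictConvexOn ℝ univ ℓhat)
    (hle : ∀ z ∈ Y, ℓhat z ≤ ℓ z)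
    (xe : Vec n) (ue : Vec m) (htouch : ℓhat (xe, ue) = ℓ (xe, ue))
    (hmem : (xe, ue) ∈ Y) (heq : f (xe, ue) = xe)
    (hmin : ∀ z ∈ Y, f z = z.1 → ℓhat (xe, ue) ≤ ℓhat z)
    (hstrictmin : ∀ z ∈ Y, f z = z.1 → z.1 ≠ xe → ℓhat (xe, ue) < ℓhat z)
    (slater : ∃ z : Vec n × Vec m, (∀ i, g z i < 0) ∧ z.1 - A.mulVec z.1 - B.mulVec z.2 = 0) :
    ∃ ν : Vec n, ∃ α : ℝ → ℝ,
      StrictPreDissipativeWith f Y ℓ xe ue (fun x => ν ⬝ᵥ x) α := by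
  classical
  -- the linear constraint map
  obtain ⟨L, hLz⟩ : ∃ L : (Vec n × Vec m) →L[ℝ] Vec n,
      ∀ z : Vec n × Vec m, L z = z.1 - A.mulVec z.1 - B.mulVec z.2 := by
    set Llin : (Vec n × Vec m) →ₗ[ℝ] Vec n :=
      LinearMap.fst ℝ (Vec n) (Vec m) - A.mulVecLin.comp (LinearMap.fst ℝ (Vec n) (Vec m))
        - B.mulVecLin.comp (LinearMap.snd ℝ (Vec n) (Vec m)) with hLlin
    refine ⟨{ toLinearMap := Llin, cont := Llin.continuous_of_finiteDimensional }, fun z => ?_⟩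
    simp [hLlin, LinearMap.sub_apply, Matrix.mulVecLin_apply]
  have hLf : ∀ z : Vec n × Vec m, L z = z.1 - f z := by
    intro z
    rw [hLz, hf, sub_sub]
  -- continuity of the gᵢ and basic properties of Y
  have hcontg : ∀ i, Continuous fun z => g z i := fun i =>
    continuousOn_univ.mp (ConvexOn.continuousOn isOpen_univ (hg i))
  have hYconv : Convex ℝ Y := by
    rw [hY]
    have : {z : Vec n × Vec m | ∀ i, g z i ≤ 0} = ⋂ i, {z | g z i ≤ 0} := by
      ext z; simp [mem_iInter]
    rw [this]
    refine convex_iInter fun i => ?_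
    have := (hg i).convex_le 0
    simpa [sep_univ] using this
  have hYclosed : IsClosed Y := by
    rw [hY]
    have : {z : Vec n × Vec m | ∀ i, g z i ≤ 0} = ⋂ i, (fun z => g z i) ⁻¹' Iic 0 := by
      ext z; simp [mem_iInter]
    rw [this]
    exact isClosed_iInter fun i => IsClosed.preimage (hcontg i) isClosed_Iic
  -- continuity and convexity of ℓhat
  have hcontℓhat : Continuous ℓhat :=
    continuousOn_univ.mp (ConvexOn.continuousOn isOpen_univ hhat.convexOn)
  -- the shifted cost h
  obtain ⟨h, hhdef⟩ : ∃ h : Vec n × Vec m → ℝ, ∀ z, h z = ℓhat z - ℓhat (xe, ue) :=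
    ⟨fun z => ℓhat z - ℓhat (xe, ue), fun _ => rfl⟩
  have hhconv : ConvexOn ℝ univ h := by
    refine ⟨convex_univ, fun x _ y _ a b ha hb hab => ?_⟩
    have h1 := hhat.convexOn.2 (mem_univ x) (mem_univ y) ha hb hab
    simp only [smul_eq_mul] at h1 ⊢
    simp only [hhdef]
    have hc : a * ℓhat (xe, ue) + b * ℓhat (xe, ue) = ℓhat (xe, ue) := by
      rw [← add_mul, hab, one_mul]
    linarith [h1, hc]
  have hhcont : Continuous h := by
    have : h = fun z => ℓhat z - ℓhat (xe, ue) := funext hhdef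
    rw [this]
    exact hcontℓhat.sub continuous_const
  have hmin' : ∀ z ∈ Y, L z = 0 → 0 ≤ h z := by
    intro z hz hLz0
    have hfz : f z = z.1 := by
      have h1 := hLf z
      rw [hLz0] at h1
      have h2 := h1.symm
      rwa [sub_eq_zero, eq_comm] at h2
    have := hmin z hz hfz
    rw [hhdef]
    linarith
  -- Slater point
  obtain ⟨zh, hzh1, hzh2⟩ := slater
  have hzhint : zh ∈ interior Y := by
    have hOopen : IsOpen {z : Vec n × Vec m | ∀ i, g z i < 0} := by
      have : {z : Vec n × Vec m | ∀ i, g z i < 0} = ⋂ i, (fun z => g z i) ⁻¹' Iio 0 := by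
        ext z; simp [mem_iInter]
      rw [this]
      exact isOpen_iInter_of_finite fun i => IsOpen.preimage (hcontg i) isOpen_Iio
    have hOY : {z : Vec n × Vec m | ∀ i, g z i < 0} ⊆ Y := by
      rw [hY]; intro z hz i; exact le_of_lt (hz i)
    exact interior_maximal hOY hOopen hzh1
  have hLzh : L zh = 0 := by rw [hLz]; exact hzh2
  -- the multiplier
  obtain ⟨φ, hφ⟩ := exists_multiplier L Y hYconv h hhconv hhcont hmin' zh hzhint hLzh
  -- the storage vector ν
  obtain ⟨ν, hφν⟩ : ∃ ν : Vec n, ∀ y : Vec n, φ y = ν ⬝ᵥ y := by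
    refine ⟨fun i => φ (Pi.single i 1), fun y => ?_⟩
    have hy : y = ∑ i, y i • (Pi.single i 1 : Vec n) := by
      ext j
      simp [Pi.single_apply, Finset.sum_apply]
    calc φ y = φ (∑ i, y i • (Pi.single i 1 : Vec n)) := by rw [← hy]
      _ = ∑ i, y i * φ (Pi.single i 1) := by
          rw [map_sum]; simp [_root_.map_smul, smul_eq_mul]
      _ = (fun i => φ (Pi.single i 1)) ⬝ᵥ y := by simp [dotProduct, mul_comm]
  -- the rotated cost
  obtain ⟨lt, hltdef⟩ : ∃ lt : Vec n × Vec m → ℝ,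
      ∀ z, lt z = ℓhat z - ℓhat (xe, ue) + φ (L z) :=
    ⟨fun z => ℓhat z - ℓhat (xe, ue) + φ (L z), fun _ => rfl⟩
  have hnonneg : ∀ z ∈ Y, 0 ≤ lt z := by
    intro z hz
    have h1 := hφ z hz
    rw [hhdef] at h1
    rw [hltdef]
    linarith
  have hLze : L (xe, ue) = 0 := by
    rw [hLf]
    simp only [heq]
    simp
  have hltze : lt (xe, ue) = 0 := by rw [hltdef, hLze]; simp
  -- strict convexity of lt
  have haffconv : ConvexOn ℝ univ fun z : Vec n × Vec m => -ℓhat (xe, ue) + φ (L z) := by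
    refine ⟨convex_univ, fun x _ y _ a b ha hb hab => le_of_eq ?_⟩
    simp only [map_add, _root_.map_smul, smul_eq_mul]
    linear_combination (ℓhat (xe, ue)) * hab
  have hltstrict : StrictConvexOn ℝ univ lt := by
    have h1 := hhat.add_convexOn haffconv
    have heqfun : (ℓhat + fun z : Vec n × Vec m => -ℓhat (xe, ue) + φ (L z)) = lt := by
      funext z; rw [hltdef]; simp; ring
    rwa [heqfun] at h1
  have hltcont : Continuous lt := by
    have : lt = fun z => ℓhat z - ℓhat (xe, ue) + φ (L z) := funext hltdef
    rw [this]
    exact (hcontℓhat.sub continuous_const).add (φ.continuous.comp L.continuous)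
  have hltconv : ConvexOn ℝ univ lt := hltstrict.convexOn
  -- pointwise positivity
  have hpos : ∀ w ∈ Y, w ≠ (xe, ue) → 0 < lt w := by
    intro w hw hne
    have hmid : (1/2 : ℝ) • w + (1/2 : ℝ) • (xe, ue) ∈ Y :=
      hYconv hw hmem (by norm_num) (by norm_num) (by norm_num)
    have hval := hltstrict.2 (mem_univ w) (mem_univ ((xe, ue) : Vec n × Vec m)) hne
      (by norm_num : (0:ℝ) < 1/2) (by norm_num : (0:ℝ) < 1/2) (by norm_num)
    rw [hltze] at hval
    have h0 := hnonneg _ hmid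
    simp only [smul_eq_mul] at hval h0
    have hkey := lt_of_le_of_lt h0 hval
    linarith
  -- linear growth constant
  obtain ⟨c₁, hc₁pos, hc₁⟩ := ray_bound Y hYconv hYclosed lt hltcont hltconv (xe, ue)
    hmem hltze hpos 1 one_pos
  -- c₂
  obtain ⟨c₂, hc₂def⟩ : ∃ c₂ : ℝ, c₂ = min c₁ 1 := ⟨min c₁ 1, rfl⟩
  have hc₂pos : 0 < c₂ := hc₂def ▸ lt_min hc₁pos one_pos
  have hc₂le1 : c₂ ≤ 1 := hc₂def ▸ min_le_right _ _
  have hc₂lec₁ : c₂ ≤ c₁ := hc₂def ▸ min_le_left _ _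
  -- the monotone gauge m₀
  obtain ⟨m₀, hm₀def⟩ : ∃ m₀ : ℝ → ℝ, ∀ t, m₀ t =
      sInf (insert (1:ℝ) (lt '' {z | z ∈ Y ∧ t ≤ ‖z.1 - xe‖})) :=
    ⟨_, fun _ => rfl⟩
  have hlb : ∀ t : ℝ, ∀ x ∈ insert (1:ℝ) (lt '' {z | z ∈ Y ∧ t ≤ ‖z.1 - xe‖}), (0:ℝ) ≤ x := by
    rintro t x (rfl | ⟨z, ⟨hz, -⟩, rfl⟩)
    · norm_num
    · exact hnonneg z hz
  have hbdd : ∀ t : ℝ, BddBelow (insert (1:ℝ) (lt '' {z | z ∈ Y ∧ t ≤ ‖z.1 - xe‖})) :=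
    fun t => ⟨0, fun x hx => hlb t x hx⟩
  have hm₀nonneg : ∀ t, 0 ≤ m₀ t := fun t => by
    rw [hm₀def]
    exact le_csInf ⟨1, mem_insert _ _⟩ (hlb t)
  have hm₀mono : Monotone m₀ := by
    intro t t' htt'
    rw [hm₀def, hm₀def]
    refine csInf_le_csInf (hbdd t) ⟨1, mem_insert _ _⟩ ?_
    refine insert_subset_insert (image_mono ?_)
    intro z hz
    exact ⟨hz.1, le_trans htt' hz.2⟩
  have hnormfst : ∀ z : Vec n × Vec m, ‖z.1 - xe‖ ≤ ‖z - (xe, ue)‖ := by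
    intro z
    have h1 : (z - ((xe, ue) : Vec n × Vec m)).1 = z.1 - xe := rfl
    rw [← h1]
    exact norm_fst_le (z - (xe, ue))
  have hm₀pos : ∀ t : ℝ, 0 < t → 0 < m₀ t := by
    intro t ht
    obtain ⟨c, hcpos, hc⟩ := ray_bound Y hYconv hYclosed lt hltcont hltconv (xe, ue)
      hmem hltze hpos (min t 1) (lt_min ht one_pos)
    have hm' : min c 1 ≤ m₀ t := by
      rw [hm₀def]
      refine le_csInf ⟨1, mem_insert _ _⟩ ?_
      rintro x (rfl | ⟨z, ⟨hz, hzt⟩, rfl⟩)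
      · exact min_le_right _ _
      · have hs : min t 1 ≤ ‖z - ((xe, ue) : Vec n × Vec m)‖ :=
          le_trans (le_trans (min_le_left t 1) hzt) (hnormfst z)
        have hfrac : (1:ℝ) ≤ ‖z - ((xe, ue) : Vec n × Vec m)‖ / min t 1 :=
          (one_le_div (lt_min ht one_pos)).2 hs
        calc min c 1 ≤ c := min_le_left _ _
          _ = c * 1 := by ring
          _ ≤ c * (‖z - ((xe, ue) : Vec n × Vec m)‖ / min t 1) :=
            mul_le_mul_of_nonneg_left hfrac (le_of_lt hcpos)
          _ ≤ lt z := hc z hz hs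
    exact lt_of_lt_of_le (lt_min hcpos one_pos) hm'
  have hm₀le : ∀ z ∈ Y, m₀ ‖z.1 - xe‖ ≤ lt z := by
    intro z hz
    rw [hm₀def]
    exact csInf_le (hbdd _) (mem_insert_of_mem _ ⟨z, ⟨hz, le_rfl⟩, rfl⟩)
  -- the integrand
  obtain ⟨Mf, hMfdef⟩ : ∃ Mf : ℝ → ℝ, ∀ t, Mf t = min (m₀ t) c₂ := ⟨_, fun _ => rfl⟩
  have hMfmono : Monotone Mf := by
    intro a b hab
    rw [hMfdef, hMfdef]
    exact min_le_min (hm₀mono hab) le_rfl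
  have hMf0 : ∀ t, 0 ≤ Mf t := fun t => by
    rw [hMfdef]; exact le_min (hm₀nonneg t) (le_of_lt hc₂pos)
  have hMfub : ∀ t, Mf t ≤ c₂ := fun t => by rw [hMfdef]; exact min_le_right _ _
  have hMfpos : ∀ t : ℝ, 0 < t → 0 < Mf t := fun t ht => by
    rw [hMfdef]; exact lt_min (hm₀pos t ht) hc₂pos
  obtain ⟨hKInf, hub1, hub2⟩ := alpha_props Mf c₂ hMfmono hMf0 hMfub hc₂pos hc₂le1 hMfpos
  refine ⟨ν, fun r => ∫ u in (0:ℝ)..r, Mf u, hmem, heq, ?_, hKInf, ?_⟩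
  · -- bounded on bounded subsets
    intro S hS hSb
    obtain ⟨R, hR⟩ := isBounded_iff_forall_norm_le.1 hSb
    refine isBounded_iff_forall_norm_le.2 ⟨‖φ‖ * R, ?_⟩
    rintro y ⟨x, hx, rfl⟩
    show ‖ν ⬝ᵥ x‖ ≤ ‖φ‖ * R
    rw [← hφν]
    calc ‖φ x‖ ≤ ‖φ‖ * ‖x‖ := φ.le_opNorm x
      _ ≤ ‖φ‖ * R := mul_le_mul_of_nonneg_left (hR x hx) (norm_nonneg φ)
  · -- the dissipation inequality
    intro z hz _
    have ht0 : (0:ℝ) ≤ ‖z.1 - xe‖ := norm_nonneg _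
    have hlam : ν ⬝ᵥ z.1 - ν ⬝ᵥ (f z) = φ (L z) := by
      rw [← dotProduct_sub, ← hφν]
      congr 1
      rw [hLf]
    have hbase : lt z ≤ ℓ z - ℓ (xe, ue) + ν ⬝ᵥ z.1 - ν ⬝ᵥ (f z) := by
      have h1 := hle z hz
      rw [hltdef]
      linarith [hlam, htouch]
    rw [ge_iff_le]
    show (∫ u in (0:ℝ)..‖z.1 - xe‖, Mf u) ≤ ℓ z - ℓ (xe, ue) + ν ⬝ᵥ z.1 - ν ⬝ᵥ (f z)
    have hgoal : (∫ u in (0:ℝ)..‖z.1 - xe‖, Mf u) ≤ lt z := by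
      rcases le_or_gt ‖z.1 - xe‖ 1 with hcase | hcase
      · calc (∫ u in (0:ℝ)..‖z.1 - xe‖, Mf u) ≤ ‖z.1 - xe‖ * Mf ‖z.1 - xe‖ := hub1 _ ht0
          _ ≤ 1 * Mf ‖z.1 - xe‖ := mul_le_mul_of_nonneg_right hcase (hMf0 _)
          _ = Mf ‖z.1 - xe‖ := one_mul _
          _ ≤ m₀ ‖z.1 - xe‖ := by rw [hMfdef]; exact min_le_left _ _
          _ ≤ lt z := hm₀le z hz
      · have hs1 : 1 ≤ ‖z - ((xe, ue) : Vec n × Vec m)‖ :=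
          le_trans (le_of_lt hcase) (hnormfst z)
        calc (∫ u in (0:ℝ)..‖z.1 - xe‖, Mf u) ≤ ‖z.1 - xe‖ * c₂ := hub2 _ ht0
          _ ≤ ‖z.1 - xe‖ * c₁ := mul_le_mul_of_nonneg_left hc₂lec₁ ht0
          _ ≤ ‖z - ((xe, ue) : Vec n × Vec m)‖ * c₁ :=
            mul_le_mul_of_nonneg_right (hnormfst z) (le_of_lt hc₁pos)
          _ = c₁ * (‖z - ((xe, ue) : Vec n × Vec m)‖ / 1) := by ring
          _ ≤ lt z := hc₁ z hz hs1
    exact hgoal.trans hbase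
end

section
/- Let x⁺ = f(x,u) be a discrete-time control system with constraint set Y ⊆ ℝⁿ × ℝᵐ and suppose the system is strictly dissipative for a stage cost ℓ at an equilibrium (xᵉ,uᵉ) lying in the interior of Y, with storage function λ. Assume f, ℓ and λ are continuously differentiable. Then there exists a Lagrange multiplier νᵉ ∈ ℝⁿ such that (xᵉ,uᵉ,νᵉ) satisfies the first-order necessary (KKT) conditions of the problem min_{(x,u)} ℓ(x,u) subject to x − f(x,u) = 0, i.e. the gradient with respect to (x,u) of the Lagrange function L(x,u,ν) = ℓ(x,u) + νᵀ(x − f(x,u)) vanishes at (xᵉ,uᵉ,νᵉ) and x − f(x,u) = 0 holds there, and moreover the identity ∇ₓλ(xᵉ) = νᵉ holds. -/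
open Set Bornology Matrix Filter

/-- Proposition 2.6: if the system is strictly dissipative with a `C¹` storage
function `λ` at an equilibrium in the interior of `Y`, and `f`, `ℓ` are `C¹`, then there is a
Lagrange multiplier `νᵉ` of the optimal equilibrium problem (the KKT conditions hold) with
`∇λ(xᵉ) = νᵉ`. -/
theorem stmt3 {n m : ℕ} (f : Vec n × Vec m → Vec n) (Y : Set (Vec n × Vec m))
    (ℓ : Vec n × Vec m → ℝ) (xe : Vec n) (ue : Vec m) (lam : Vec n → ℝ)
    (hdiss : ∃ α : ℝ → ℝ, StrictDissipativeWith f Y ℓ xe ue lam α)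
    (hint : (xe, ue) ∈ interior Y)
    (hf : ContDiff ℝ 1 f) (hℓ : ContDiff ℝ 1 ℓ) (hlam : ContDiff ℝ 1 lam) :
    ∃ ν : Vec n,
      fderiv ℝ (fun z : Vec n × Vec m => ℓ z + ν ⬝ᵥ (z.1 - f z)) (xe, ue) = 0 ∧
      xe - f (xe, ue) = 0 ∧
      ∀ v : Vec n, fderiv ℝ lam xe v = ν ⬝ᵥ v := by
  obtain ⟨α, ⟨⟨hYe, hfe, _, hK, hDI⟩, _⟩⟩ := hdiss
  set L : Vec n →L[ℝ] ℝ := fderiv ℝ lam xe with hLdef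
  set ν : Vec n := fun i => L (fun j => if i = j then 1 else 0) with hν
  have hLv : ∀ v : Vec n, L v = ν ⬝ᵥ v := by
    intro v
    have h := LinearMap.pi_apply_eq_sum_univ (L : Vec n →ₗ[ℝ] ℝ) v
    simp only [ContinuousLinearMap.coe_coe] at h
    rw [h]
    simp [dotProduct, hν, mul_comm]
  -- differentiability facts
  have hfd : HasFDerivAt f (fderiv ℝ f (xe, ue)) (xe, ue) :=
    (hf.differentiable one_ne_zero (xe, ue)).hasFDerivAt
  set B := fderiv ℝ f (xe, ue) with hB
  have hlamxe : HasFDerivAt lam L xe := (hlam.differentiable one_ne_zero xe).hasFDerivAt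
  have hlamfe : HasFDerivAt lam L (f (xe, ue)) := by rw [hfe]; exact hlamxe
  have hcomp : HasFDerivAt (fun z => lam (f z)) (L.comp B) (xe, ue) :=
    hlamfe.comp (xe, ue) hfd
  have hℓd : HasFDerivAt ℓ (fderiv ℝ ℓ (xe, ue)) (xe, ue) :=
    (hℓ.differentiable one_ne_zero (xe, ue)).hasFDerivAt
  set A := fderiv ℝ ℓ (xe, ue) with hA
  have hfst : HasFDerivAt (fun z : Vec n × Vec m => lam z.1)
      (L.comp (ContinuousLinearMap.fst ℝ (Vec n) (Vec m))) (xe, ue) :=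
    hlamxe.comp (xe, ue) (hasFDerivAt_fst)
  set Lf := L.comp (ContinuousLinearMap.fst ℝ (Vec n) (Vec m)) with hLf
  have hgd : HasFDerivAt (fun z => ℓ z + lam z.1 - lam (f z)) (A + Lf - L.comp B) (xe, ue) :=
    (hℓd.add hfst).sub hcomp
  -- local minimum
  have hloc : IsLocalMin (fun z => ℓ z + lam z.1 - lam (f z)) (xe, ue) := by
    have hYnb : Y ∈ nhds (xe, ue) :=
      mem_of_superset (isOpen_interior.mem_nhds hint) interior_subset
    obtain ⟨ε, hε, hball⟩ := Metric.mem_nhds_iff.mp (isOpen_interior.mem_nhds hint)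
    have hstate : stateSet Y ∈ nhds xe := by
      apply mem_of_superset (Metric.ball_mem_nhds xe hε)
      intro x hx
      refine ⟨ue, interior_subset (hball ?_)⟩
      rw [Metric.mem_ball, Prod.dist_eq]
      simp only [Prod.fst, Prod.snd, dist_self]
      have : dist x xe < ε := by simpa using hx
      exact sup_lt_iff.mpr ⟨this, hε⟩
    have hpre : {z : Vec n × Vec m | f z ∈ stateSet Y} ∈ nhds (xe, ue) :=
      (hf.continuous.continuousAt).preimage_mem_nhds (by rw [hfe]; exact hstate)
    filter_upwards [hYnb, hpre] with z hz1 hz2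
    have hd := hDI z hz1 hz2
    have hα : 0 ≤ α ‖z.1 - xe‖ := hK.2.2.2.1 _ (norm_nonneg _)
    simp only [hfe]
    linarith
  have hD0 : A + Lf - L.comp B = 0 := hloc.hasFDerivAt_eq_zero hgd
  refine ⟨ν, ?_, by rw [hfe]; simp, fun v => hLv v⟩
  have hFd : HasFDerivAt (fun z : Vec n × Vec m => ℓ z + ν ⬝ᵥ (z.1 - f z))
      (A + Lf - L.comp B) (xe, ue) := by
    have heq : (fun z : Vec n × Vec m => ℓ z + ν ⬝ᵥ (z.1 - f z))
        = fun z => ℓ z + (L z.1 - L (f z)) := by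
      funext z
      rw [← L.map_sub, hLv, dotProduct_comm]
    have hfst' : HasFDerivAt (fun z : Vec n × Vec m => L z.1) Lf (xe, ue) :=
      L.hasFDerivAt.comp _ hasFDerivAt_fst
    have hcomp' : HasFDerivAt (fun z => L (f z)) (L.comp B) (xe, ue) :=
      L.hasFDerivAt.comp _ hfd
    rw [heq, add_sub_assoc]
    exact hℓd.add (hfst'.sub hcomp')
  rw [hFd.fderiv, hD0]
end

section
/- Consider linear dynamics f(x,u) = Ax + Bu and convex stage costs ℓ₁ and ℓ₂ : ℝⁿ × ℝᵐ → ℝ, where at least one of ℓ₁, ℓ₂ is strictly convex. Assume the constraint set Y = {(x,u) : g(x,u) ≤ 0 componentwise} with g convex is convex and compact, that for each μ ∈ (0,1) the problem min_{(x,u)∈Y} ℓ_μ(x,u) subject to x − Ax − Bu = 0 has a global minimum (xᵉ_μ,uᵉ_μ), where ℓ_μ = μℓ₁ + (1−μ)ℓ₂, and that the Slater condition holds: there exists (x̂,û) with g(x̂,û) < 0 componentwise and x̂ − Ax̂ − Bû = 0. Then the system is strictly dissipative at the optimal equilibrium (xᵉ_μ,uᵉ_μ) for the cost function ℓ_μ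 for all μ ∈ (0,1). -/
open Set Bornology Matrix Filter

/-- every nondecreasing, positive-on-positives function `b` vanishing at `0` with linear
growth lower bound admits a `K∞` minorant. -/
lemma kinf_minorant (R : ℝ) (hR : 0 ≤ R) (b : ℝ → ℝ) (hb0 : b 0 = 0)
    (hbnn : ∀ r, 0 ≤ r → 0 ≤ b r)
    (hbmono : ∀ r s, 0 ≤ r → r ≤ s → b r ≤ b s)
    (hbpos : ∀ r, 0 < r → 0 < b r)
    (hbgrow : ∀ r, 0 ≤ r → r - R ≤ b r) :
    ∃ α : ℝ → ℝ, KInf α ∧ ∀ r, 0 ≤ r → α r ≤ b r := by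
  set γ : ℝ → ℝ := fun r => sInf ((fun s => b s + |r - s|) '' Ici 0) with hγdef
  have hne : ∀ r : ℝ, ((fun s => b s + |r - s|) '' Ici 0).Nonempty :=
    fun r => ⟨b 0 + |r - 0|, mem_image_of_mem _ self_mem_Ici⟩
  have hbdd : ∀ r : ℝ, BddBelow ((fun s => b s + |r - s|) '' Ici 0) := by
    intro r
    refine ⟨0, ?_⟩
    rintro x ⟨s, hs, rfl⟩
    have := hbnn s hs
    positivity
  have hγle : ∀ r, 0 ≤ r → γ r ≤ b r := by
    intro r hr
    have : b r + |r - r| = b r := by simp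
    calc γ r ≤ b r + |r - r| := csInf_le (hbdd r) (mem_image_of_mem _ hr)
    _ = b r := by simp
  have hγnn : ∀ r, 0 ≤ γ r := by
    intro r
    refine le_csInf (hne r) ?_
    rintro x ⟨s, hs, rfl⟩
    have := hbnn s hs
    positivity
  have hγ0 : γ 0 = 0 := le_antisymm (by simpa [hb0] using hγle 0 le_rfl) (hγnn 0)
  have hγmono : ∀ r₁ r₂, 0 ≤ r₁ → r₁ ≤ r₂ → γ r₁ ≤ γ r₂ := by
    intro r₁ r₂ hr₁ h12
    refine le_csInf (hne r₂) ?_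
    rintro x ⟨s, hs, rfl⟩
    simp only [mem_Ici] at hs
    rcases le_or_gt r₂ s with hcase | hcase
    · -- use s' = s - r₂ + r₁
      have hs' : (0:ℝ) ≤ s - r₂ + r₁ := by linarith
      calc γ r₁ ≤ b (s - r₂ + r₁) + |r₁ - (s - r₂ + r₁)| :=
            csInf_le (hbdd r₁) (mem_image_of_mem _ hs')
        _ ≤ b s + |r₂ - s| := by
            have h1 : b (s - r₂ + r₁) ≤ b s := hbmono _ _ hs' (by linarith)
            have h2 : |r₁ - (s - r₂ + r₁)| = |r₂ - s| := by
              rw [abs_sub_comm r₂ s, show r₁ - (s - r₂ + r₁) = -(s - r₂) by ring, abs_neg]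
            linarith [h2 ▸ le_refl (|r₁ - (s - r₂ + r₁)|)]
    · rcases le_or_gt r₁ s with hcase2 | hcase2
      · calc γ r₁ ≤ b r₁ + |r₁ - r₁| := csInf_le (hbdd r₁) (mem_image_of_mem _ hr₁)
          _ = b r₁ := by simp
          _ ≤ b s + |r₂ - s| := by
              have := hbmono _ _ hr₁ hcase2
              have := abs_nonneg (r₂ - s)
              linarith
      · calc γ r₁ ≤ b s + |r₁ - s| := csInf_le (hbdd r₁) (mem_image_of_mem _ hs)
          _ ≤ b s + |r₂ - s| := by
              rw [abs_of_nonneg (by linarith : (0:ℝ) ≤ r₁ - s),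
                abs_of_nonneg (by linarith : (0:ℝ) ≤ r₂ - s)]
              linarith
  have hγlb : ∀ r, 0 ≤ r → min (r / 2) (b (r / 2)) ≤ γ r := by
    intro r hr
    refine le_csInf (hne r) ?_
    rintro x ⟨s, hs, rfl⟩
    simp only [mem_Ici] at hs
    rcases le_or_gt s (r / 2) with hcase | hcase
    · have habs : |r - s| = r - s := abs_of_nonneg (by linarith)
      have hbs := hbnn s hs
      have hkey : r / 2 ≤ b s + |r - s| := by rw [habs]; linarith
      exact le_trans (min_le_left _ _) hkey
    · have h1 : b (r / 2) ≤ b s := hbmono _ _ (by linarith) hcase.le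
      have := abs_nonneg (r - s)
      exact le_trans (min_le_right _ _) (by linarith)
  have hγlip : ∀ r₁ r₂, γ r₁ ≤ γ r₂ + |r₁ - r₂| := by
    intro r₁ r₂
    have : γ r₁ - |r₁ - r₂| ≤ γ r₂ := by
      refine le_csInf (hne r₂) ?_
      rintro x ⟨s, hs, rfl⟩
      have h1 : γ r₁ ≤ b s + |r₁ - s| := csInf_le (hbdd r₁) (mem_image_of_mem _ hs)
      have h2 : |r₁ - s| ≤ |r₁ - r₂| + |r₂ - s| := abs_sub_le r₁ r₂ s
      dsimp only
      linarith
    linarith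
  have hγcont : ContinuousOn γ (Ici 0) := by
    have : LipschitzOnWith 1 γ (Ici 0) := by
      refine LipschitzOnWith.of_dist_le_mul ?_
      intro x _ y _
      rw [Real.dist_eq, Real.dist_eq]
      push_cast
      rw [one_mul]
      have h1 := hγlip x y
      have h2 := hγlip y x
      rw [abs_sub_comm y x] at h2
      rw [abs_sub_le_iff]
      constructor <;> [linarith; linarith]
    exact this.continuousOn
  -- the K-infinity function
  refine ⟨fun r => γ r * (r / (1 + r)), ⟨?_, ?_, ?_, ?_, ?_⟩, ?_⟩
  · -- continuity
    refine hγcont.mul (ContinuousOn.div continuousOn_id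
      (continuous_const.add continuous_id).continuousOn ?_)
    intro x hx
    simp only [mem_Ici] at hx
    positivity
  · -- strict monotonicity
    intro r₁ hr₁ r₂ hr₂ h12
    simp only [mem_Ici] at hr₁ hr₂
    have hs12 : r₁ / (1 + r₁) < r₂ / (1 + r₂) := by
      rw [div_lt_div_iff₀ (by linarith) (by linarith)]
      nlinarith
    have hs1nn : 0 ≤ r₁ / (1 + r₁) := by positivity
    have hγ2pos : 0 < γ r₂ := by
      have h1 := hγlb r₂ (by linarith)
      have h2 : 0 < r₂ / 2 := by linarith
      have h3 := hbpos _ h2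
      have : 0 < min (r₂ / 2) (b (r₂ / 2)) := lt_min h2 h3
      linarith
    have hγ12 := hγmono r₁ r₂ hr₁ h12.le
    calc γ r₁ * (r₁ / (1 + r₁)) ≤ γ r₂ * (r₁ / (1 + r₁)) :=
          mul_le_mul_of_nonneg_right hγ12 hs1nn
      _ < γ r₂ * (r₂ / (1 + r₂)) := by
          exact mul_lt_mul_of_pos_left hs12 hγ2pos
  · simp
  · intro r hr
    simp only [mem_Ici] at hr
    have := hγnn r
    positivity
  · -- unbounded
    intro M
    rcases lt_or_ge M 0 with hM | hM
    · refine ⟨1, by norm_num, ?_⟩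
      have := hγnn 1
      have : 0 ≤ γ 1 * (1 / (1 + 1)) := by positivity
      linarith
    · set r := 4 * M + 2 * R + 4 with hrdef
      have hr1 : 1 ≤ r := by linarith
      have hr0 : 0 ≤ r := by linarith
      refine ⟨r, by simp [mem_Ici]; linarith, ?_⟩
      have hγr : 2 * M + 2 ≤ γ r := by
        have h1 := hγlb r hr0
        have h2 := hbgrow (r / 2) (by linarith)
        have h3 : 2 * M + 2 ≤ r / 2 - R := by linarith
        have h4 : 2 * M + 2 ≤ r / 2 := by linarith
        have : (2 * M + 2 : ℝ) ≤ min (r / 2) (b (r / 2)) := le_min h4 (by linarith)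
        linarith
      have hsr : (1:ℝ) / 2 ≤ r / (1 + r) := by
        rw [div_le_div_iff₀ (by norm_num) (by linarith)]
        linarith
      have hγrnn : 0 ≤ γ r := hγnn r
      calc M < (2 * M + 2) * (1 / 2) := by linarith
        _ ≤ γ r * (r / (1 + r)) := by
            apply mul_le_mul hγr hsr (by norm_num)
            linarith
  · -- minorant
    intro r hr
    have h1 := hγle r hr
    have h2 : r / (1 + r) ≤ 1 := by
      rw [div_le_one (by linarith)]; linarith
    have h3 : 0 ≤ r / (1 + r) := by positivity
    calc γ r * (r / (1 + r)) ≤ γ r * 1 := mul_le_mul_of_nonneg_left h2 (hγnn r)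
      _ = γ r := mul_one _
      _ ≤ b r := h1

/-- A continuous linear functional negative on the (nonempty) interior of a convex set is
nonpositive on the whole set. -/
lemma le_on_of_lt_on_interior {E : Type*} [NormedAddCommGroup E] [NormedSpace ℝ E]
    {C : Set E} (hC : Convex ℝ C) (F : E →L[ℝ] ℝ) {a₀ : E} (ha₀ : a₀ ∈ interior C)
    (hlt : ∀ a ∈ interior C, F a < 0) : ∀ a ∈ C, F a ≤ 0 := by
  intro a ha
  by_contra hpos
  push_neg at hpos
  have key : ∀ t : ℝ, 0 < t → t ≤ 1 → t * F a₀ + (1 - t) * F a < 0 := by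
    intro t ht ht1
    have hmem : t • a₀ + (1 - t) • a ∈ interior C :=
      hC.combo_interior_self_mem_interior ha₀ ha ht (by linarith) (by ring)
    have := hlt _ hmem
    simpa [map_add, _root_.map_smul, smul_eq_mul] using this
  rcases le_or_gt (F a - F a₀) 0 with hd | hd
  · have := key (1/2) (by norm_num) (by norm_num)
    linarith
  · set t := min (1/2 : ℝ) (F a / (2 * (F a - F a₀))) with htdef
    have ht0 : 0 < t := lt_min (by norm_num) (div_pos hpos (by linarith))
    have ht1 : t ≤ 1 := le_trans (min_le_left _ _) (by norm_num)
    have h1 := key t ht0 ht1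
    have h2 : F a < t * (F a - F a₀) := by ring_nf at h1 ⊢; linarith
    have h3 : t * (F a - F a₀) ≤ F a / 2 := by
      calc t * (F a - F a₀) ≤ (F a / (2 * (F a - F a₀))) * (F a - F a₀) :=
            mul_le_mul_of_nonneg_right (min_le_right _ _) hd.le
        _ = F a / 2 := by field_simp
    linarith


lemma aux_limit {X L c : ℝ} (hc : c < 0) (h : ∀ ε : ℝ, 0 < ε → X + (L + ε) * c ≤ 0) :
    X + L * c ≤ 0 := by
  by_contra hcon
  push_neg at hcon
  have hne : c ≠ 0 := ne_of_lt hc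
  have hε := h ((X + L * c) / (-2 * c)) (div_pos hcon (by linarith))
  have hkey : (L + (X + L * c) / (-2 * c)) * c = L * c - (X + L * c) / 2 := by
    field_simp
    ring
  nlinarith [hε, hkey]

lemma aux_div {X L c : ℝ} (hc : c < 0) (h : X + L * c ≤ 0) : 0 ≤ L + 1 / c * X := by
  have hne : c ≠ 0 := ne_of_lt hc
  have h5 : 0 ≤ 1 / c * (X + L * c) := by nlinarith [one_div_neg.mpr hc]
  have h6 : 1 / c * (X + L * c) = 1 / c * X + L := by
    field_simp
  linarith

set_option maxHeartbeats 2000000 in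
/-- Theorem 3.4: for linear dynamics and convex stage costs `ℓ₁`, `ℓ₂`, at
least one of which is strictly convex, with a convex compact constraint set given by convex
inequalities and the Slater condition, the system is strictly dissipative at the optimal
equilibrium `(xᵉ_μ, uᵉ_μ)` for `ℓ_μ = μ ℓ₁ + (1-μ) ℓ₂` for all `μ ∈ (0,1)`. -/
theorem stmt7 {n m p : ℕ} (A : Matrix (Fin n) (Fin n) ℝ) (B : Matrix (Fin n) (Fin m) ℝ)
    (f : Vec n × Vec m → Vec n) (hf : f = fun z => A.mulVec z.1 + B.mulVec z.2)
    (g : Vec n × Vec m → Fin p → ℝ) (Y : Set (Vec n × Vec m))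
    (hY : Y = {z | ∀ i, g z i ≤ 0})
    (hg : ∀ i, ConvexOn ℝ univ fun z => g z i)
    (hYconv : Convex ℝ Y) (hYcomp : IsCompact Y)
    (ℓ₁ ℓ₂ : Vec n × Vec m → ℝ)
    (hconv₁ : ConvexOn ℝ univ ℓ₁) (hconv₂ : ConvexOn ℝ univ ℓ₂)
    (hstrict : StrictConvexOn ℝ univ ℓ₁ ∨ StrictConvexOn ℝ univ ℓ₂)
    (xe : ℝ → Vec n) (ue : ℝ → Vec m)
    (hopt : ∀ μ ∈ Ioo (0 : ℝ) 1, (xe μ, ue μ) ∈ Y ∧ f (xe μ, ue μ) = xe μ ∧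
      ∀ z ∈ Y, f z = z.1 →
        μ * ℓ₁ (xe μ, ue μ) + (1 - μ) * ℓ₂ (xe μ, ue μ) ≤ μ * ℓ₁ z + (1 - μ) * ℓ₂ z)
    (slater : ∃ z : Vec n × Vec m, (∀ i, g z i < 0) ∧ z.1 - A.mulVec z.1 - B.mulVec z.2 = 0) :
    ∀ μ ∈ Ioo (0 : ℝ) 1,
      StrictDissipative f Y (fun z => μ * ℓ₁ z + (1 - μ) * ℓ₂ z) (xe μ) (ue μ) := by
  intro μ hμ
  obtain ⟨hμ0, hμ1⟩ := hμ
  obtain ⟨heY, heq, hmin⟩ := hopt μ ⟨hμ0, hμ1⟩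
  set e : Vec n × Vec m := (xe μ, ue μ) with he
  set ℓ : Vec n × Vec m → ℝ := fun z => μ * ℓ₁ z + (1 - μ) * ℓ₂ z with hℓdef
  -- continuity and convexity of ℓ
  have hc1 : Continuous ℓ₁ := continuousOn_univ.mp (hconv₁.continuousOn isOpen_univ)
  have hc2 : Continuous ℓ₂ := continuousOn_univ.mp (hconv₂.continuousOn isOpen_univ)
  have hℓcont : Continuous ℓ := (continuous_const.mul hc1).add (continuous_const.mul hc2)
  have hℓconv : ConvexOn ℝ univ ℓ := by
    have h := (hconv₁.smul hμ0.le).add (hconv₂.smul (by linarith : (0:ℝ) ≤ 1 - μ))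
    exact h
  have hℓmid : ∀ z w : Vec n × Vec m, z ≠ w →
      ℓ ((1/2 : ℝ) • z + (1/2 : ℝ) • w) < (1/2) * ℓ z + (1/2) * ℓ w := by
    intro z w hzw
    rcases hstrict with hs | hs
    · have h1 := hs.2 (mem_univ z) (mem_univ w) hzw (by norm_num : (0:ℝ) < 1/2)
        (by norm_num : (0:ℝ) < 1/2) (by norm_num)
      have h2 := hconv₂.2 (mem_univ z) (mem_univ w) (by norm_num : (0:ℝ) ≤ 1/2)
        (by norm_num : (0:ℝ) ≤ 1/2) (by norm_num)
      simp only [smul_eq_mul] at h1 h2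
      have e1 := mul_lt_mul_of_pos_left h1 hμ0
      have e2 := mul_le_mul_of_nonneg_left h2 (by linarith : (0:ℝ) ≤ 1 - μ)
      simp only [hℓdef]
      nlinarith
    · have h1 := hs.2 (mem_univ z) (mem_univ w) hzw (by norm_num : (0:ℝ) < 1/2)
        (by norm_num : (0:ℝ) < 1/2) (by norm_num)
      have h2 := hconv₁.2 (mem_univ z) (mem_univ w) (by norm_num : (0:ℝ) ≤ 1/2)
        (by norm_num : (0:ℝ) ≤ 1/2) (by norm_num)
      simp only [smul_eq_mul] at h1 h2
      have e1 := mul_lt_mul_of_pos_left h1 (by linarith : (0:ℝ) < 1 - μ)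
      have e2 := mul_le_mul_of_nonneg_left h2 hμ0.le
      simp only [hℓdef]
      nlinarith
  -- the linear map H z = z.1 - f z
  have hmf : ∀ z : Vec n × Vec m, f z = A.mulVec z.1 + B.mulVec z.2 := fun z => by rw [hf]
  set H : (Vec n × Vec m) →ₗ[ℝ] Vec n :=
    LinearMap.fst ℝ (Vec n) (Vec m) - A.mulVecLin.comp (LinearMap.fst ℝ (Vec n) (Vec m))
      - B.mulVecLin.comp (LinearMap.snd ℝ (Vec n) (Vec m)) with hHdef
  have hH : ∀ z : Vec n × Vec m, H z = z.1 - f z := by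
    intro z
    simp only [hHdef, LinearMap.sub_apply, LinearMap.comp_apply, LinearMap.fst_apply,
      LinearMap.snd_apply, LinearMap.add_apply, Matrix.mulVecLin_apply, hmf z, sub_sub]
  have Hcont : Continuous H := H.continuous_of_finiteDimensional
  set W : Submodule ℝ (Vec n) := LinearMap.range H with hWdef
  set hL : (Vec n × Vec m) →L[ℝ] W := LinearMap.toContinuousLinearMap H.rangeRestrict
    with hhLdef
  have hLcoe : ∀ z, ((hL z : W) : Vec n) = H z := fun z => rfl
  have hLsurj : Function.Surjective hL := by
    have : ⇑hL = ⇑H.rangeRestrict := rfl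
    rw [this]
    exact H.surjective_rangeRestrict
  -- Slater point
  obtain ⟨zs, hzs_lt, hzs_eq⟩ := slater
  have hzsH : H zs = 0 := by
    rw [hH zs, hmf zs, ← sub_sub]
    exact hzs_eq
  have hgcont : ∀ i, Continuous fun z => g z i :=
    fun i => continuousOn_univ.mp ((hg i).continuousOn isOpen_univ)
  have hUopen : IsOpen {z : Vec n × Vec m | ∀ i, g z i < 0} := by
    have hset : {z : Vec n × Vec m | ∀ i, g z i < 0} = ⋂ i, (fun z => g z i) ⁻¹' Iio 0 := by
      ext z; simp
    rw [hset]
    exact isOpen_iInter_of_finite fun i => isOpen_Iio.preimage (hgcont i)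
  have hUY : {z : Vec n × Vec m | ∀ i, g z i < 0} ⊆ Y := by
    rw [hY]; intro z hz i; exact (hz i).le
  obtain ⟨δ, hδ0, hδball⟩ := Metric.isOpen_iff.mp hUopen zs hzs_lt
  have himg_open : IsOpen (hL '' Metric.ball 0 δ) := hL.isOpenMap hLsurj _ Metric.isOpen_ball
  have h0mem : (0 : W) ∈ hL '' Metric.ball 0 δ :=
    ⟨0, by simpa using hδ0, map_zero hL⟩
  obtain ⟨δ', hδ'0, hδ'ball⟩ := Metric.isOpen_iff.mp himg_open 0 h0mem
  -- the convex set to separate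
  set Cs : Set (W × ℝ) := {q | ∃ z ∈ Y, hL z = q.1 ∧ ℓ z - ℓ e < q.2} with hCdef
  have hCconv : Convex ℝ Cs := by
    rintro ⟨w₁, t₁⟩ ⟨z₁, hz₁Y, hz₁w, hz₁t⟩ ⟨w₂, t₂⟩ ⟨z₂, hz₂Y, hz₂w, hz₂t⟩ a bb ha hb hab
    refine ⟨a • z₁ + bb • z₂, hYconv hz₁Y hz₂Y ha hb hab, ?_, ?_⟩
    · simp only [Prod.smul_mk, Prod.mk_add_mk, map_add, _root_.map_smul, hz₁w, hz₂w]
    · have hcvx := hℓconv.2 (mem_univ z₁) (mem_univ z₂) ha hb hab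
      simp only [smul_eq_mul] at hcvx
      simp only [Prod.smul_mk, Prod.mk_add_mk, smul_eq_mul] at hz₁t hz₂t ⊢
      rcases lt_or_ge 0 a with ha0 | ha0
      · have e1 := mul_lt_mul_of_pos_left hz₁t ha0
        have e2 := mul_le_mul_of_nonneg_left hz₂t.le hb
        have e3 : a * ℓ e + bb * ℓ e = ℓ e := by rw [← add_mul, hab, one_mul]
        nlinarith
      · have ha0' : a = 0 := le_antisymm ha0 ha
        have hbb : bb = 1 := by linarith
        rw [ha0', hbb] at hcvx ⊢
        simp only [zero_mul, one_mul, zero_add] at hcvx ⊢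
        linarith
  have hCnot : ((0 : W), (0 : ℝ)) ∉ Cs := by
    rintro ⟨z, hzY, hz1, hz2⟩
    have hzH : H z = 0 := by
      have hh := congrArg (fun w : W => (w : Vec n)) hz1
      simpa [hLcoe] using hh
    have hfz : f z = z.1 := by
      have hh := hH z
      rw [hzH] at hh
      exact (sub_eq_zero.mp hh.symm).symm
    have hopt2 := hmin z hzY hfz
    simp only [hℓdef] at hz2
    norm_num at hz2
    linarith
  -- maximum of ℓ on Y
  obtain ⟨zM, hzMY, hzM⟩ := hYcomp.exists_isMaxOn ⟨e, heY⟩ hℓcont.continuousOn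
  set M : ℝ := ℓ zM - ℓ e with hMdef
  have hM0 : 0 ≤ M := by
    have hfact := hzM heY
    simp only [mem_setOf_eq] at hfact
    simp only [hMdef]
    linarith
  have hMub : ∀ z ∈ Y, ℓ z - ℓ e ≤ M := by
    intro z hz
    have hfact := hzM hz
    simp only [mem_setOf_eq] at hfact
    simp only [hMdef]
    linarith
  -- interior point of Cs
  have hPsub : (Metric.ball (0:W) δ') ×ˢ Ioi M ⊆ Cs := by
    rintro ⟨w, t⟩ ⟨hw, ht⟩
    obtain ⟨v, hv, hveq⟩ := hδ'ball hw
    have hvball : zs + v ∈ Metric.ball zs δ := by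
      simp only [Metric.mem_ball] at hv ⊢
      simpa [dist_eq_norm] using hv
    refine ⟨zs + v, hUY (hδball hvball), ?_, ?_⟩
    · have hzs0 : hL zs = 0 := by
        apply Subtype.ext
        simpa [hLcoe] using hzsH
      simp only [map_add, hzs0, zero_add, hveq]
    · have := hMub _ (hUY (hδball hvball))
      simp only [mem_Ioi] at ht
      simp only
      linarith
  have ha₀ : ((0:W), M + 1) ∈ interior Cs := by
    apply interior_maximal hPsub (Metric.isOpen_ball.prod isOpen_Ioi)
    exact ⟨by simpa using hδ'0, by simp only [mem_Ioi]; linarith⟩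
  -- separation
  obtain ⟨F, hF⟩ := geometric_hahn_banach_open_point hCconv.interior isOpen_interior
    (fun hmem => hCnot (interior_subset hmem))
  have hFlt : ∀ a ∈ interior Cs, F a < 0 := by
    intro a ha
    have h := hF a ha
    have h0 : F ((0 : W), (0 : ℝ)) = 0 := by
      have : ((0 : W), (0 : ℝ)) = (0 : W × ℝ) := rfl
      rw [this, map_zero]
    rwa [h0] at h
  have hFle : ∀ a ∈ Cs, F a ≤ 0 := le_on_of_lt_on_interior hCconv F ha₀ hFlt
  set c : ℝ := F (0, 1) with hcdef
  have hsplit : ∀ (w : W) (t : ℝ), F (w, t) = F (w, 0) + t * c := by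
    intro w t
    have hq : (w, t) = ((w, (0:ℝ)) : W × ℝ) + t • ((0:W), (1:ℝ)) := by
      simp [Prod.ext_iff]
    rw [hq, map_add, _root_.map_smul, smul_eq_mul]
  have hc_neg : c < 0 := by
    have h := hFlt _ ha₀
    rw [hsplit 0 (M+1)] at h
    have h0 : F ((0:W), (0:ℝ)) = 0 := by
      have : ((0 : W), (0 : ℝ)) = (0 : W × ℝ) := rfl
      rw [this, map_zero]
    rw [h0] at h
    nlinarith
  -- key multiplier inequality
  have hkey : ∀ z ∈ Y, 0 ≤ ℓ z - ℓ e + (1/c) * F (hL z, 0) := by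
    intro z hz
    have hε : ∀ ε : ℝ, 0 < ε → F (hL z, 0) + (ℓ z - ℓ e + ε) * c ≤ 0 := by
      intro ε hεp
      have hmem : ((hL z, ℓ z - ℓ e + ε) : W × ℝ) ∈ Cs := ⟨z, hz, rfl, by dsimp only; linarith⟩
      have h := hFle _ hmem
      rwa [hsplit] at h
    exact aux_div hc_neg (aux_limit hc_neg hε)
  -- extend the functional
  obtain ⟨Λ, hΛ, -⟩ := exists_extension_norm_eq W
    ((1/c) • (F.comp (ContinuousLinearMap.inl ℝ W ℝ)))
  have hΛH : ∀ z : Vec n × Vec m, Λ (H z) = (1/c) * F (hL z, 0) := by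
    intro z
    have h1 : Λ (H z) = Λ ((hL z : W) : Vec n) := by rw [hLcoe]
    rw [h1, hΛ (hL z)]
    simp [ContinuousLinearMap.smul_apply, ContinuousLinearMap.comp_apply,
      ContinuousLinearMap.inl_apply, smul_eq_mul]
  -- rotated cost
  set lt : Vec n × Vec m → ℝ := fun z => ℓ z - ℓ e + Λ (H z) with hltdef
  have hltnn : ∀ z ∈ Y, 0 ≤ lt z := by
    intro z hz
    have := hkey z hz
    simp only [hltdef, hΛH]
    linarith
  have hHe : H e = 0 := by
    rw [hH]
    have : e.1 = xe μ := rfl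
    rw [this, heq, sub_self]
  have hlte : lt e = 0 := by simp [hltdef, hHe]
  have hltpos : ∀ z ∈ Y, z ≠ e → 0 < lt z := by
    intro z hz hne
    by_contra hcon
    push_neg at hcon
    have h0 : lt z = 0 := le_antisymm hcon (hltnn z hz)
    set w : Vec n × Vec m := (1/2 : ℝ) • z + (1/2 : ℝ) • e with hwdef
    have hwY : w ∈ Y := hYconv hz heY (by norm_num) (by norm_num) (by norm_num)
    have h1 := hℓmid z e hne
    have h2 : Λ (H w) = (1/2) * Λ (H z) + (1/2) * Λ (H e) := by
      simp only [hwdef, map_add, _root_.map_smul, smul_eq_mul]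
    have h3 := hltnn w hwY
    have hexpz : lt z = ℓ z - ℓ e + Λ (H z) := rfl
    have hexpw : lt w = ℓ w - ℓ e + Λ (H w) := rfl
    have heq0 : Λ (H e) = 0 := by rw [hHe, map_zero]
    rw [← hwdef] at h1
    clear_value lt w ℓ e
    linarith [hexpz, hexpw, heq0, h0, h1, h2, h3]
  have hltcont : Continuous lt := by
    apply Continuous.add
    · exact hℓcont.sub continuous_const
    · exact Λ.continuous.comp Hcont
  -- radius
  obtain ⟨zR, hzRY, hzR⟩ := hYcomp.exists_isMaxOn ⟨e, heY⟩
    ((continuous_fst.sub continuous_const).norm.continuousOn :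
      ContinuousOn (fun z : Vec n × Vec m => ‖z.1 - xe μ‖) Y)
  set R : ℝ := ‖zR.1 - xe μ‖ with hRdef
  have hR0 : 0 ≤ R := norm_nonneg _
  have hRub : ∀ z ∈ Y, ‖z.1 - xe μ‖ ≤ R := fun z hz => hzR hz
  -- β
  set β : ℝ → ℝ := fun ρ => sInf (lt '' {z ∈ Y | ρ ≤ ‖z.1 - xe μ‖}) with hβdef
  have hKcomp : ∀ ρ : ℝ, IsCompact {z ∈ Y | ρ ≤ ‖z.1 - xe μ‖} := by
    intro ρ
    have hset : {z ∈ Y | ρ ≤ ‖z.1 - xe μ‖} =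
        Y ∩ (fun z : Vec n × Vec m => ‖z.1 - xe μ‖) ⁻¹' Ici ρ := rfl
    rw [hset]
    exact hYcomp.inter_right
      (isClosed_Ici.preimage (continuous_fst.sub continuous_const).norm)
  have hKne : ∀ ρ : ℝ, ρ ≤ R → {z ∈ Y | ρ ≤ ‖z.1 - xe μ‖}.Nonempty :=
    fun ρ hρ => ⟨zR, hzRY, by rw [← hRdef]; exact hρ⟩
  have hβbdd : ∀ ρ : ℝ, BddBelow (lt '' {z ∈ Y | ρ ≤ ‖z.1 - xe μ‖}) := by
    intro ρ
    refine ⟨0, ?_⟩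
    rintro x ⟨z, ⟨hzY, -⟩, rfl⟩
    exact hltnn z hzY
  have hβle : ∀ z ∈ Y, β ‖z.1 - xe μ‖ ≤ lt z :=
    fun z hz => csInf_le (hβbdd _) ⟨z, ⟨hz, le_rfl⟩, rfl⟩
  have hβnn : ∀ ρ, 0 ≤ β ρ := by
    intro ρ
    apply Real.sInf_nonneg
    rintro x ⟨z, ⟨hzY, -⟩, rfl⟩
    exact hltnn z hzY
  have hβmono : ∀ ρ₁ ρ₂ : ℝ, ρ₁ ≤ ρ₂ → ρ₂ ≤ R → β ρ₁ ≤ β ρ₂ := by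
    intro ρ₁ ρ₂ h12 h2R
    apply csInf_le_csInf (hβbdd _) ((hKne ρ₂ h2R).image lt)
    apply image_mono
    rintro z ⟨hzY, hz⟩
    exact ⟨hzY, le_trans h12 hz⟩
  have hβpos : ∀ ρ : ℝ, 0 < ρ → ρ ≤ R → 0 < β ρ := by
    intro ρ h0 hρR
    obtain ⟨z₀, hz₀mem, hz₀min⟩ := (hKcomp ρ).exists_isMinOn (hKne ρ hρR)
      hltcont.continuousOn
    obtain ⟨hz₀Y, hz₀n⟩ := hz₀mem
    have hz₀ne : z₀ ≠ e := by
      intro hcontra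
      rw [hcontra] at hz₀n
      have : e.1 = xe μ := rfl
      rw [this, sub_self, norm_zero] at hz₀n
      linarith
    have hpos := hltpos z₀ hz₀Y hz₀ne
    have hlb : lt z₀ ≤ β ρ := by
      apply le_csInf (((hKne ρ hρR)).image lt)
      rintro x ⟨z, hzmem, rfl⟩
      exact hz₀min hzmem
    linarith
  -- b and α
  set b : ℝ → ℝ := fun r => min (β (min r R)) r + max (r - R) 0 with hbdef
  have hb0 : b 0 = 0 := by
    simp only [hbdef]
    rw [min_eq_left hR0, min_eq_right (hβnn 0), max_eq_right (by linarith : (0:ℝ) - R ≤ 0)]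
    simp
  have hbnn : ∀ r : ℝ, 0 ≤ r → 0 ≤ b r := by
    intro r hr
    have h1 : (0:ℝ) ≤ min (β (min r R)) r := le_min (hβnn _) hr
    have h2 : (0:ℝ) ≤ max (r - R) 0 := le_max_right _ _
    simp only [hbdef]
    linarith
  have hbmono : ∀ r s : ℝ, 0 ≤ r → r ≤ s → b r ≤ b s := by
    intro r s hr hrs
    have m1 : min r R ≤ min s R := min_le_min hrs le_rfl
    have m2 : β (min r R) ≤ β (min s R) := hβmono _ _ m1 (min_le_right s R)
    simp only [hbdef]
    exact add_le_add (min_le_min m2 hrs) (max_le_max (by linarith) le_rfl)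
  have hbpos : ∀ r : ℝ, 0 < r → 0 < b r := by
    intro r hr
    simp only [hbdef]
    rcases le_or_gt r R with hcase | hcase
    · rw [min_eq_left hcase]
      have h1 : 0 < min (β r) r := lt_min (hβpos r hr hcase) hr
      have h2 : (0:ℝ) ≤ max (r - R) 0 := le_max_right _ _
      linarith
    · have h1 : (0:ℝ) ≤ min (β (min r R)) r := le_min (hβnn _) hr.le
      have h2 : (0:ℝ) < max (r - R) 0 := lt_max_of_lt_left (by linarith)
      linarith
  have hbgrow : ∀ r : ℝ, 0 ≤ r → r - R ≤ b r := by
    intro r hr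
    have h1 : (0:ℝ) ≤ min (β (min r R)) r := le_min (hβnn _) hr
    have h2 : r - R ≤ max (r - R) 0 := le_max_left _ _
    simp only [hbdef]
    linarith
  obtain ⟨α, hαK, hαle⟩ := kinf_minorant R hR0 b hb0 hbnn hbmono hbpos hbgrow
  -- assemble
  refine ⟨fun x => Λ x, α, ⟨⟨heY, heq, ?_, hαK, ?_⟩, ?_⟩⟩
  · -- BddOnBddSubsets
    intro S _ hSb
    exact Λ.lipschitz.isBounded_image hSb
  · -- DissIneq
    intro z hzY _
    have hdiff : Λ z.1 - Λ (f z) = Λ (H z) := by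
      rw [hH]
      exact (map_sub Λ _ _).symm
    have h1 : α ‖z.1 - xe μ‖ ≤ b ‖z.1 - xe μ‖ := hαle _ (norm_nonneg _)
    have h2 : b ‖z.1 - xe μ‖ ≤ lt z := by
      have hrR := hRub z hzY
      simp only [hbdef]
      rw [min_eq_left hrR, max_eq_right (by linarith : ‖z.1 - xe μ‖ - R ≤ 0), add_zero]
      exact le_trans (min_le_left _ _) (hβle z hzY)
    have h3 : lt z = ℓ z - ℓ e + Λ (H z) := rfl
    simp only [ge_iff_le]
    rw [he] at h3
    linarith [h1, h2, h3, hdiff]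
  · -- BddBelow
    have hst : stateSet Y = Prod.fst '' Y := by
      ext x
      constructor
      · rintro ⟨u, hu⟩
        exact ⟨(x, u), hu, rfl⟩
      · rintro ⟨z, hz, rfl⟩
        exact ⟨z.2, hz⟩
    have hbd : IsBounded (stateSet Y) := by
      rw [hst]
      exact (hYcomp.image continuous_fst).isBounded
    exact (Λ.lipschitz.isBounded_image hbd).bddBelow
end

section
/- Let a, b ∈ ℝ and q₁, q₂, r₁, r₂, s₁, s₂, v₁, v₂ ∈ ℝ with qᵢ, rᵢ > 0, and assume b ≠ 0 or a ≠ 1 (so that all denominators below are positive). Define νᵢ = (qᵢvᵢb − (1−a)rᵢsᵢ)/(qᵢb² + (1−a)²rᵢ) for i = 1,2 and, for μ ∈ [0,1], ν_μ = [b(μq₁+(1−μ)q₂)(μv₁+(1−μ)v₂) − (1−a)(μr₁+(1−μ)r₂)(μs₁+(1−μ)s₂)] / [b²(μq₁+(1−μ)q₂) + (1−a)²(μr₁+(1−μ)r₂)]. If a = 1 or q₁r₂ = q₂r₁, then ν_μ = μν₁ + (1−μ)ν₂ for all μ ∈ [0,1]. -/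
open Set

/-- Example 3.3: for the scalar LQ problem, if `a = 1` or `q₁ r₂ = q₂ r₁`,
then the Lagrange multiplier `ν_μ` of the combined problem is the convex combination
`μ ν₁ + (1-μ) ν₂` of the individual Lagrange multipliers for all `μ ∈ [0,1]`. -/
theorem stmt8 (a b q₁ q₂ r₁ r₂ s₁ s₂ v₁ v₂ : ℝ)
    (hq₁ : 0 < q₁) (hq₂ : 0 < q₂) (hr₁ : 0 < r₁) (hr₂ : 0 < r₂)
    (hab : b ≠ 0 ∨ a ≠ 1)
    (ν₁ ν₂ : ℝ)
    (hν₁ : ν₁ = (q₁ * v₁ * b - (1 - a) * r₁ * s₁) / (q₁ * b ^ 2 + (1 - a) ^ 2 * r₁))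
    (hν₂ : ν₂ = (q₂ * v₂ * b - (1 - a) * r₂ * s₂) / (q₂ * b ^ 2 + (1 - a) ^ 2 * r₂))
    (νμ : ℝ → ℝ)
    (hνμ : ∀ μ : ℝ, νμ μ =
      (b * (μ * q₁ + (1 - μ) * q₂) * (μ * v₁ + (1 - μ) * v₂) -
        (1 - a) * (μ * r₁ + (1 - μ) * r₂) * (μ * s₁ + (1 - μ) * s₂)) /
      (b ^ 2 * (μ * q₁ + (1 - μ) * q₂) + (1 - a) ^ 2 * (μ * r₁ + (1 - μ) * r₂)))
    (hcase : a = 1 ∨ q₁ * r₂ = q₂ * r₁) :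
    ∀ μ ∈ Icc (0 : ℝ) 1, νμ μ = μ * ν₁ + (1 - μ) * ν₂ := by
  rintro μ ⟨hμ0, hμ1⟩
  have hQ : 0 < μ * q₁ + (1 - μ) * q₂ := by
    rcases lt_or_ge μ 1 with h | h
    · nlinarith [mul_nonneg hμ0 hq₁.le, mul_pos (by linarith : (0:ℝ) < 1 - μ) hq₂]
    · have hμ : μ = 1 := le_antisymm hμ1 h
      rw [hμ]; simpa using hq₁
  have hR : 0 < μ * r₁ + (1 - μ) * r₂ := by
    rcases lt_or_ge μ 1 with h | h
    · nlinarith [mul_nonneg hμ0 hr₁.le, mul_pos (by linarith : (0:ℝ) < 1 - μ) hr₂]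
    · have hμ : μ = 1 := le_antisymm hμ1 h
      rw [hμ]; simpa using hr₁
  rw [hνμ, hν₁, hν₂]
  rcases hcase with ha | hqr
  · have hb : b ≠ 0 := hab.resolve_right (by simp [ha])
    subst ha
    have h1 : q₁ * b ^ 2 + (1 - 1) ^ 2 * r₁ ≠ 0 := by positivity
    have h2 : q₂ * b ^ 2 + (1 - 1) ^ 2 * r₂ ≠ 0 := by positivity
    have h3 : b ^ 2 * (μ * q₁ + (1 - μ) * q₂) + (1 - 1) ^ 2 * (μ * r₁ + (1 - μ) * r₂) ≠ 0 := by
      positivity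
    field_simp
    ring
  · set t := r₁ / q₁ with htdef
    have ht : 0 < t := div_pos hr₁ hq₁
    have hr1 : r₁ = q₁ * t := by rw [htdef]; field_simp
    have hr2 : r₂ = q₂ * t := by
      rw [htdef]; field_simp; linarith [hqr]
    have hD : 0 < b ^ 2 + (1 - a) ^ 2 * t := by
      rcases hab with hb | ha
      · have : 0 < b ^ 2 := by positivity
        nlinarith [sq_nonneg (1 - a)]
      · have h1a : (1 : ℝ) - a ≠ 0 := sub_ne_zero.mpr (Ne.symm ha)
        have : 0 < (1 - a) ^ 2 := by positivity
        nlinarith [sq_nonneg b]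
    have key : ∀ q v s : ℝ, 0 < q →
        (q * v * b - (1 - a) * (q * t) * s) / (q * b ^ 2 + (1 - a) ^ 2 * (q * t)) =
        (v * b - (1 - a) * t * s) / (b ^ 2 + (1 - a) ^ 2 * t) := by
      intro q v s hq
      rw [show q * v * b - (1 - a) * (q * t) * s = q * (v * b - (1 - a) * t * s) by ring,
        show q * b ^ 2 + (1 - a) ^ 2 * (q * t) = q * (b ^ 2 + (1 - a) ^ 2 * t) by ring,
        mul_div_mul_left _ _ hq.ne']
    rw [hr1, hr2, key q₁ v₁ s₁ hq₁, key q₂ v₂ s₂ hq₂]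
    have keyμ :
        (b * (μ * q₁ + (1 - μ) * q₂) * (μ * v₁ + (1 - μ) * v₂) -
          (1 - a) * (μ * (q₁ * t) + (1 - μ) * (q₂ * t)) * (μ * s₁ + (1 - μ) * s₂)) /
        (b ^ 2 * (μ * q₁ + (1 - μ) * q₂) + (1 - a) ^ 2 * (μ * (q₁ * t) + (1 - μ) * (q₂ * t))) =
        ((μ * v₁ + (1 - μ) * v₂) * b - (1 - a) * t * (μ * s₁ + (1 - μ) * s₂)) /
        (b ^ 2 + (1 - a) ^ 2 * t) := by
      rw [show b * (μ * q₁ + (1 - μ) * q₂) * (μ * v₁ + (1 - μ) * v₂) -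
            (1 - a) * (μ * (q₁ * t) + (1 - μ) * (q₂ * t)) * (μ * s₁ + (1 - μ) * s₂) =
            (μ * q₁ + (1 - μ) * q₂) *
              ((μ * v₁ + (1 - μ) * v₂) * b - (1 - a) * t * (μ * s₁ + (1 - μ) * s₂)) by ring,
        show b ^ 2 * (μ * q₁ + (1 - μ) * q₂) + (1 - a) ^ 2 * (μ * (q₁ * t) + (1 - μ) * (q₂ * t)) =
            (μ * q₁ + (1 - μ) * q₂) * (b ^ 2 + (1 - a) ^ 2 * t) by ring,
        mul_div_mul_left _ _]
      exact hQ.ne'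
    rw [keyμ]
    field_simp
    ring
end

section
/- Let x⁺ = f(x,u) be a discrete-time control system with f continuous, constraint set Y, and continuous stage costs ℓ₁, ℓ₂ : Y → ℝ. Assume that for every μ in a compact interval [μ̲, μ̄] ⊆ [0,1] the system is strictly dissipative for the cost ℓ_μ = μℓ₁ + (1−μ)ℓ₂ at an equilibrium (xᵉ_μ,uᵉ_μ), and that all these equilibria are contained in a compact set Ŷ ⊂ Y. Then the map μ ↦ xᵉ_μ is continuous on [μ̲, μ̄]. -/
open Set Bornology Matrix Filter
open Topology

/-- If `z` is an equilibrium in `Y` whose cost does not exceed that of `(xe, ue)`, strict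
dissipativity forces `z.1 = xe`. -/
private lemma key_eq {n m : ℕ} (f : Vec n × Vec m → Vec n)
    (Y : Set (Vec n × Vec m)) (ℓ : Vec n × Vec m → ℝ) (xe : Vec n) (ue : Vec m)
    (h : StrictDissipative f Y ℓ xe ue) (z : Vec n × Vec m) (hzY : z ∈ Y)
    (hfz : f z = z.1) (hle : ℓ z ≤ ℓ (xe, ue)) : z.1 = xe := by
  obtain ⟨lam, α, ⟨⟨hmem, hfix, hbdd, ⟨hc, hmono, h0, hpos, hub⟩, hDI⟩, _⟩⟩ := h
  have hst : f z ∈ stateSet Y := by rw [hfz]; exact ⟨z.2, by simpa using hzY⟩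
  have hineq := hDI z hzY hst
  rw [hfz] at hineq
  have hα : α ‖z.1 - xe‖ ≤ 0 := by linarith
  by_contra hne
  have hpos' : (0 : ℝ) < ‖z.1 - xe‖ := by
    rw [norm_pos_iff]; exact sub_ne_zero.mpr hne
  have := hmono (le_refl (0:ℝ)) (le_of_lt hpos') hpos'
  rw [h0] at this
  linarith

/-- The equilibrium at `ν` minimizes the `ν`-cost among all equilibria at other parameters. -/
private lemma key_le {n m : ℕ} (f : Vec n × Vec m → Vec n)
    (Y : Set (Vec n × Vec m)) (ℓ₁ ℓ₂ : Vec n × Vec m → ℝ) (μlo μhi : ℝ)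
    (xe : ℝ → Vec n) (ue : ℝ → Vec m)
    (hdiss : ∀ μ ∈ Icc μlo μhi,
      StrictDissipative f Y (fun z => μ * ℓ₁ z + (1 - μ) * ℓ₂ z) (xe μ) (ue μ))
    (μ ν : ℝ) (hμ : μ ∈ Icc μlo μhi) (hν : ν ∈ Icc μlo μhi) :
    ν * ℓ₁ (xe ν, ue ν) + (1 - ν) * ℓ₂ (xe ν, ue ν) ≤
      ν * ℓ₁ (xe μ, ue μ) + (1 - ν) * ℓ₂ (xe μ, ue μ) := by
  obtain ⟨lamμ, αμ, ⟨⟨hmemμ, hfixμ, _, _, _⟩, _⟩⟩ := hdiss μ hμ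
  obtain ⟨lam, α, ⟨⟨hmem, hfix, hbdd, ⟨hc, hmono, h0, hposα, hub⟩, hDI⟩, _⟩⟩ := hdiss ν hν
  have hst : f (xe μ, ue μ) ∈ stateSet Y := by rw [hfixμ]; exact ⟨ue μ, hmemμ⟩
  have hineq := hDI (xe μ, ue μ) hmemμ hst
  rw [hfixμ] at hineq
  have hα : 0 ≤ α ‖(xe μ, ue μ).1 - xe ν‖ := hposα _ (norm_nonneg _)
  simp only at hineq
  linarith

/-- Theorem 4.1: if the system is strictly dissipative for
`ℓ_μ = μ ℓ₁ + (1-μ) ℓ₂` at equilibria `(xᵉ_μ, uᵉ_μ)` for all `μ` in a compact subinterval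
`[μ̲, μ̄] ⊆ [0,1]`, and these equilibria lie in a compact subset of `Y`, then `μ ↦ xᵉ_μ`
is continuous on `[μ̲, μ̄]`. -/
theorem stmt9 {n m : ℕ} (f : Vec n × Vec m → Vec n) (hf : Continuous f)
    (Y : Set (Vec n × Vec m)) (ℓ₁ ℓ₂ : Vec n × Vec m → ℝ)
    (hℓ₁ : ContinuousOn ℓ₁ Y) (hℓ₂ : ContinuousOn ℓ₂ Y)
    (μlo μhi : ℝ) (hsub : Icc μlo μhi ⊆ Icc (0 : ℝ) 1)
    (xe : ℝ → Vec n) (ue : ℝ → Vec m)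
    (hdiss : ∀ μ ∈ Icc μlo μhi,
      StrictDissipative f Y (fun z => μ * ℓ₁ z + (1 - μ) * ℓ₂ z) (xe μ) (ue μ))
    (Yhat : Set (Vec n × Vec m)) (hYhat : IsCompact Yhat) (hYhatY : Yhat ⊆ Y)
    (heqin : ∀ μ ∈ Icc μlo μhi, (xe μ, ue μ) ∈ Yhat) :
    ContinuousOn xe (Icc μlo μhi) := by
  intro μ hμ
  have hfix : ∀ ν ∈ Icc μlo μhi, f (xe ν, ue ν) = xe ν := by
    intro ν hν
    obtain ⟨lam, α, ⟨⟨_, hf', _, _, _⟩, _⟩⟩ := hdiss ν hν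
    exact hf'
  have hEμY : (xe μ, ue μ) ∈ Y := by
    obtain ⟨lam, α, ⟨⟨hm, _, _, _, _⟩, _⟩⟩ := hdiss μ hμ
    exact hm
  apply tendsto_of_subseq_tendsto
  intro ns hns
  have hmem : ∀ᶠ k in atTop, ns k ∈ Icc μlo μhi := hns.eventually eventually_mem_nhdsWithin
  obtain ⟨N, hN⟩ := eventually_atTop.mp hmem
  set t : ℕ → ℝ := fun k => ns (k + N) with ht
  have htIcc : ∀ k, t k ∈ Icc μlo μhi := fun k => hN _ (Nat.le_add_left _ _)
  have htμ : Tendsto t atTop (𝓝 μ) :=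
    (hns.mono_right nhdsWithin_le_nhds).comp (tendsto_add_atTop_nat N)
  set e : ℕ → Vec n × Vec m := fun k => (xe (t k), ue (t k)) with he
  have heY : ∀ k, e k ∈ Yhat := fun k => heqin _ (htIcc k)
  obtain ⟨z, hzYhat, φ, hφ, hφt⟩ := hYhat.tendsto_subseq heY
  have hzY : z ∈ Y := hYhatY hzYhat
  have hν : Tendsto (fun k => t (φ k)) atTop (𝓝 μ) := htμ.comp hφ.tendsto_atTop
  have h1 : Tendsto (fun k => xe (t (φ k))) atTop (𝓝 z.1) :=
    (continuous_fst.tendsto z).comp hφt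
  have h2 : Tendsto (fun k => e (φ k)) atTop (𝓝[Y] z) :=
    tendsto_nhdsWithin_of_tendsto_nhds_of_eventually_within _ hφt
      (Eventually.of_forall fun k => hYhatY (heY (φ k)))
  have hfz : f z = z.1 := by
    have hfe : Tendsto (fun k => f (e (φ k))) atTop (𝓝 (f z)) := (hf.tendsto z).comp hφt
    have heq : (fun k => f (e (φ k))) = fun k => xe (t (φ k)) := by
      funext k; exact hfix _ (htIcc (φ k))
    rw [heq] at hfe
    exact tendsto_nhds_unique hfe h1
  have hL1 : Tendsto (fun k => ℓ₁ (e (φ k))) atTop (𝓝 (ℓ₁ z)) :=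
    (hℓ₁ z hzY).tendsto.comp h2
  have hL2 : Tendsto (fun k => ℓ₂ (e (φ k))) atTop (𝓝 (ℓ₂ z)) :=
    (hℓ₂ z hzY).tendsto.comp h2
  have hlim1 : Tendsto (fun k => t (φ k) * ℓ₁ (e (φ k)) + (1 - t (φ k)) * ℓ₂ (e (φ k)))
      atTop (𝓝 (μ * ℓ₁ z + (1 - μ) * ℓ₂ z)) :=
    (hν.mul hL1).add (((tendsto_const_nhds (x := (1:ℝ))).sub hν).mul hL2)
  have hlim2 : Tendsto
      (fun k => t (φ k) * ℓ₁ (xe μ, ue μ) + (1 - t (φ k)) * ℓ₂ (xe μ, ue μ))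
      atTop (𝓝 (μ * ℓ₁ (xe μ, ue μ) + (1 - μ) * ℓ₂ (xe μ, ue μ))) :=
    (hν.mul tendsto_const_nhds).add
      (((tendsto_const_nhds (x := (1:ℝ))).sub hν).mul tendsto_const_nhds)
  have hle : μ * ℓ₁ z + (1 - μ) * ℓ₂ z ≤ μ * ℓ₁ (xe μ, ue μ) + (1 - μ) * ℓ₂ (xe μ, ue μ) :=
    le_of_tendsto_of_tendsto' hlim1 hlim2 fun k =>
      key_le f Y ℓ₁ ℓ₂ μlo μhi xe ue hdiss μ (t (φ k)) hμ (htIcc (φ k))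
  have hz1 : z.1 = xe μ :=
    key_eq f Y (fun w => μ * ℓ₁ w + (1 - μ) * ℓ₂ w) (xe μ) (ue μ)
      (hdiss μ hμ) z hzY hfz hle
  refine ⟨fun k => φ k + N, ?_⟩
  have : (fun k => xe (ns (φ k + N))) = fun k => xe (t (φ k)) := rfl
  rw [this]
  exact hz1 ▸ h1
end

section
/- Let x⁺ = f(x,u) be a discrete-time control system with constraint set Y and let ℓ₁,…,ℓ_m be stage costs. Assume that for each i = 1,…,m the system is strictly dissipative for ℓᵢ at one and the same equilibrium (xᵉ,uᵉ), with storage function λᵢ and class-K∞ bound αᵢ. Then for all weights μ₁,…,μ_m ∈ [0,1] with μ₁ + … + μ_m = 1, the system is strictly dissipative for the convexly combined stage cost ℓ_μ = Σᵢ μᵢℓᵢ at (xᵉ,uᵉ), with storage function λ_μ = Σᵢ μᵢλᵢ and class-K∞ bound α_μ = Σᵢ μᵢαᵢ. -/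
open Set Bornology Matrix Filter

/-- Theorem 4.3, `m`-cost version: if the system is strictly dissipative for
each of the stage costs `ℓᵢ`, `i = 1,…,N`, at one and the same equilibrium `(xᵉ,uᵉ)` with
storage functions `λᵢ` and bounds `αᵢ`, then for all convex weights `μᵢ` it is strictly
dissipative for `ℓ_μ = Σ μᵢ ℓᵢ` at `(xᵉ,uᵉ)` with storage function `λ_μ = Σ μᵢ λᵢ` and
bound `α_μ = Σ μᵢ αᵢ`. -/
theorem stmt12 {n k N : ℕ} (f : Vec n × Vec k → Vec n) (Y : Set (Vec n × Vec k))
    (ℓ : Fin N → (Vec n × Vec k → ℝ)) (xe : Vec n) (ue : Vec k)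
    (lam : Fin N → (Vec n → ℝ)) (α : Fin N → (ℝ → ℝ))
    (h : ∀ i, StrictDissipativeWith f Y (ℓ i) xe ue (lam i) (α i))
    (μ : Fin N → ℝ) (hμ : ∀ i, μ i ∈ Icc (0 : ℝ) 1) (hsum : ∑ i, μ i = 1) :
    StrictDissipativeWith f Y (fun z => ∑ i, μ i * ℓ i z) xe ue
      (fun x => ∑ i, μ i * lam i x) (fun r => ∑ i, μ i * α i r) := by
  have hμ0 : ∀ i, 0 ≤ μ i := fun i => (hμ i).1
  obtain ⟨j, hj⟩ : ∃ j, μ j ≠ 0 := by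
    by_contra hc
    push_neg at hc
    simp [hc] at hsum
  have hjpos : 0 < μ j := lt_of_le_of_ne (hμ0 j) (Ne.symm hj)
  -- unpack hypotheses
  have hmem : (xe, ue) ∈ Y := (h j).1.1
  have hfe : f (xe, ue) = xe := (h j).1.2.1
  have hK : ∀ i, KInf (α i) := fun i => (h i).1.2.2.2.1
  have hαnn : ∀ i, ∀ r ∈ Ici (0 : ℝ), 0 ≤ α i r := fun i => (hK i).2.2.2.1
  refine ⟨⟨hmem, hfe, ?_, ⟨?_, ?_, ?_, ?_, ?_⟩, ?_⟩, ?_⟩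
  · -- BddOnBddSubsets
    intro S hS hSb
    have hbd : ∀ i, ∃ C, ∀ y ∈ (lam i '' S), ‖y‖ ≤ C := by
      intro i
      have := (h i).1.2.2.1 S hS hSb
      exact (isBounded_iff_forall_norm_le).1 this
    choose C hC using hbd
    rw [isBounded_iff_forall_norm_le]
    refine ⟨∑ i, μ i * |C i|, ?_⟩
    rintro y ⟨x, hx, rfl⟩
    calc ‖∑ i, μ i * lam i x‖ ≤ ∑ i, ‖μ i * lam i x‖ := norm_sum_le _ _
      _ ≤ ∑ i, μ i * |C i| := by
          refine Finset.sum_le_sum fun i _ => ?_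
          rw [norm_mul, Real.norm_eq_abs, Real.norm_eq_abs, abs_of_nonneg (hμ0 i)]
          refine mul_le_mul_of_nonneg_left ?_ (hμ0 i)
          exact le_trans (hC i _ ⟨x, hx, rfl⟩) (le_abs_self _)
  · -- continuity
    exact continuousOn_finset_sum _ fun i _ =>
      (continuousOn_const.mul (hK i).1)
  · -- strict mono
    intro a ha b hb hab
    refine Finset.sum_lt_sum (fun i _ => ?_) ⟨j, Finset.mem_univ j, ?_⟩
    · exact mul_le_mul_of_nonneg_left ((hK i).2.1 ha hb hab).le (hμ0 i)
    · exact mul_lt_mul_of_pos_left ((hK j).2.1 ha hb hab) hjpos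
  · -- zero at zero
    simp [fun i => (hK i).2.2.1]
  · -- nonneg
    intro r hr
    exact Finset.sum_nonneg fun i _ => mul_nonneg (hμ0 i) (hαnn i r hr)
  · -- unbounded
    intro M
    obtain ⟨r, hr, hMr⟩ := (hK j).2.2.2.2 (M / μ j)
    refine ⟨r, hr, ?_⟩
    have h1 : M < μ j * α j r := by
      rw [div_lt_iff₀ hjpos] at hMr; linarith [hMr]
    refine lt_of_lt_of_le h1 ?_
    exact Finset.single_le_sum (f := fun i => μ i * α i r)
      (fun i _ => mul_nonneg (hμ0 i) (hαnn i r hr)) (Finset.mem_univ j)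
  · -- dissipation inequality
    intro z hz hfz
    have key : ∀ i, α i ‖z.1 - xe‖ ≤ ℓ i z - ℓ i (xe, ue) + lam i z.1 - lam i (f z) :=
      fun i => (h i).1.2.2.2.2 z hz hfz
    have : ∑ i, μ i * α i ‖z.1 - xe‖ ≤
        ∑ i, μ i * (ℓ i z - ℓ i (xe, ue) + lam i z.1 - lam i (f z)) := by
      refine Finset.sum_le_sum fun i _ => mul_le_mul_of_nonneg_left (key i) (hμ0 i)
    simp only [ge_iff_le]
    calc ∑ i, μ i * α i ‖z.1 - xe‖
        ≤ ∑ i, μ i * (ℓ i z - ℓ i (xe, ue) + lam i z.1 - lam i (f z)) := this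
      _ = ∑ i, μ i * ℓ i z - ∑ i, μ i * ℓ i (xe, ue) + ∑ i, μ i * lam i z.1
          - ∑ i, μ i * lam i (f z) := by
          rw [← Finset.sum_sub_distrib, ← Finset.sum_add_distrib, ← Finset.sum_sub_distrib]
          exact Finset.sum_congr rfl fun i _ => by ring
  · -- BddBelow
    have hb : ∀ i, ∃ c, ∀ y ∈ lam i '' stateSet Y, c ≤ y := fun i => (h i).2
    choose c hc using hb
    refine ⟨∑ i, μ i * c i, ?_⟩
    rintro y ⟨x, hx, rfl⟩
    refine Finset.sum_le_sum fun i _ =>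
      mul_le_mul_of_nonneg_left (hc i _ ⟨x, hx, rfl⟩) (hμ0 i)
end

section
/- Let x⁺ = f(x,u) with f : ℝⁿ × ℝᵐ → ℝⁿ twice continuously differentiable, let ℓ₁, ℓ₂ be twice continuously differentiable stage costs for which the system is strictly dissipative at equilibria (x₁ᵉ,u₁ᵉ), (x₂ᵉ,u₂ᵉ) with twice continuously differentiable storage functions λ₁, λ₂, and define the rotated costs ℓ̃ᵢ(x,u) = ℓᵢ(x,u) − ℓᵢ(xᵢᵉ,uᵢᵉ) + λᵢ(x) − λᵢ(f(x,u)). For μ ∈ [0,1] let ℓ_μ = μℓ₁ + (1−μ)ℓ₂, let (xᵉ_μ,uᵉ_μ) be the globally optimal equilibrium for ℓ_μ and assume (xᵉ_μ,uᵉ_μ) lies in the interior of Y, with Lagrange multiplier ν_μ ∈ ℝⁿ, i.e. the gradient with respect to (x,u) of ℓ_μ(x,u) + ν_μᵀ(x − f(x,u)) vanishes at (xᵉ_μ,uᵉ_μ). Set λ̃_μ = ν_μ − μ∇ₓλ₁(xᵉ_μ) − (1−μ)∇ₓλ₂(xᵉ_μ) ∈ ℝⁿ. Assume there exist m₂(μ)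 > m₁(μ) ≥ 0 such that the Hessian with respect to (x,u) of μℓ̃₁ + (1−μ)ℓ̃₂ at (xᵉ_μ,uᵉ_μ) is ≥ m₂(μ)I and the Hessian with respect to (x,u) of (x,u) ↦ λ̃_μᵀf(x,u) at (xᵉ_μ,uᵉ_μ) is ≤ m₁(μ)I, for all μ ∈ [0,1]. Then for every μ ∈ [0,1] the system is locally strictly dissipative for the cost ℓ_μ at (xᵉ_μ,uᵉ_μ) with storage function λ_μ(x) = μλ₁(x) + (1−μ)λ₂(x) + λ̃_μᵀx. -/
open Set Bornology Matrix Filter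

/-- The Hessian quadratic form of `g` at `z` applied to direction `v`. -/
noncomputable def Hess {E : Type*} [NormedAddCommGroup E] [NormedSpace ℝ E] (g : E → ℝ) (z v : E) : ℝ :=
  fderiv ℝ (fderiv ℝ g) z v v


section Aux

open Metric

/-- Quadratic lower bound near a point where the first derivative vanishes and the
second derivative is positive definite. -/
lemma quadLower {E : Type*} [NormedAddCommGroup E] [NormedSpace ℝ E] (L : E → ℝ)
    (hL : ContDiff ℝ 2 L) (e : E) (δ : ℝ) (hδ : 0 < δ) (hF0 : fderiv ℝ L e = 0)
    (hA0 : ∀ v, δ * ‖v‖ ^ 2 ≤ fderiv ℝ (fderiv ℝ L) e v v) :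
    ∃ r > 0, ∀ z ∈ Metric.closedBall e r, δ / 4 * ‖z - e‖ ^ 2 ≤ L z - L e := by
  set F := fderiv ℝ L with hFdef
  set A := fderiv ℝ F with hAdef
  have hF1 : ContDiff ℝ 1 F := hL.fderiv_right (by norm_num)
  have hAc : Continuous A := hF1.continuous_fderiv one_ne_zero
  obtain ⟨r0, hr0, hball⟩ := (Metric.continuousAt_iff (f := A) (a := e)).mp hAc.continuousAt (δ/2) (by linarith)
  refine ⟨r0/2, by linarith, ?_⟩
  intro z hz
  have hzr : ‖z - e‖ ≤ r0/2 := by rwa [Metric.mem_closedBall, dist_eq_norm] at hz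
  set h := z - e with hh
  set c : ℝ → E := fun t => e + t • h with hc
  have hcd : ∀ t : ℝ, HasDerivAt c h t := by
    intro t
    simpa [hc] using (((hasDerivAt_id t).smul_const h).const_add e)
  have hdL : ∀ x, HasFDerivAt L (F x) x :=
    fun x => ((hL.differentiable two_ne_zero) x).hasFDerivAt
  have hdF : ∀ x, HasFDerivAt F (A x) x :=
    fun x => ((hF1.differentiable one_ne_zero) x).hasFDerivAt
  have hphi : ∀ t : ℝ, HasDerivAt (fun t => L (c t)) (F (c t) h) t :=
    fun t => (hdL (c t)).comp_hasDerivAt t (hcd t)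
  have hpsi : ∀ t : ℝ, HasDerivAt (fun t => F (c t) h) (A (c t) h h) t := by
    intro t
    have := ((hdF (c t)).comp_hasDerivAt t (hcd t)).clm_apply (hasDerivAt_const t h)
    simpa using this
  have hcball : ∀ t ∈ Set.Icc (0:ℝ) 1, ‖c t - e‖ ≤ r0/2 := by
    intro t ht
    have : c t - e = t • h := by simp [hc]
    rw [this, norm_smul]
    calc ‖t‖ * ‖h‖ ≤ 1 * ‖h‖ := by
          apply mul_le_mul_of_nonneg_right _ (norm_nonneg h)
          rw [Real.norm_eq_abs, abs_of_nonneg ht.1]; exact ht.2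
      _ = ‖h‖ := one_mul _
      _ ≤ r0/2 := hzr
  have hAbound : ∀ t ∈ Set.Icc (0:ℝ) 1, δ/2 * ‖h‖^2 ≤ A (c t) h h := by
    intro t ht
    have hnear : ‖A (c t) - A e‖ ≤ δ/2 := by
      have := hball (x := c t) (by
        rw [dist_eq_norm]
        exact lt_of_le_of_lt (hcball t ht) (by linarith))
      exact le_of_lt (lt_of_eq_of_lt (dist_eq_norm (A (c t)) (A e)).symm this)
    have habs : |(A (c t) - A e) h h| ≤ δ/2 * ‖h‖^2 := by
      have h1 : ‖(A (c t) - A e) h h‖ ≤ ‖(A (c t) - A e) h‖ * ‖h‖ :=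
        ((A (c t) - A e) h).le_opNorm h
      have h2 : ‖(A (c t) - A e) h‖ ≤ ‖A (c t) - A e‖ * ‖h‖ :=
        (A (c t) - A e).le_opNorm h
      calc |(A (c t) - A e) h h| ≤ ‖(A (c t) - A e) h‖ * ‖h‖ := h1
        _ ≤ (‖A (c t) - A e‖ * ‖h‖) * ‖h‖ :=
            mul_le_mul_of_nonneg_right h2 (norm_nonneg h)
        _ ≤ (δ/2 * ‖h‖) * ‖h‖ :=
            mul_le_mul_of_nonneg_right
              (mul_le_mul_of_nonneg_right hnear (norm_nonneg h)) (norm_nonneg h)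
        _ = δ/2 * ‖h‖^2 := by ring
    have hexp : A (c t) h h = A e h h + (A (c t) - A e) h h := by simp
    have hge : -(δ/2 * ‖h‖^2) ≤ (A (c t) - A e) h h := neg_le_of_abs_le habs
    rw [hexp]
    nlinarith [hA0 h]
  set P : ℝ → ℝ := fun t => F (c t) h - δ/2 * ‖h‖^2 * t with hP
  have hP' : ∀ t : ℝ, HasDerivAt P (A (c t) h h - δ/2 * ‖h‖^2) t := by
    intro t
    have h2 : HasDerivAt (fun t : ℝ => δ/2 * ‖h‖^2 * t) (δ/2 * ‖h‖^2) t := by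
      simpa using ((hasDerivAt_id t).const_mul (δ/2 * ‖h‖^2))
    exact (hpsi t).sub h2
  have hPmono : MonotoneOn P (Set.Icc 0 1) := by
    apply monotoneOn_of_deriv_nonneg (convex_Icc 0 1)
    · exact fun t _ => ((hP' t).continuousAt).continuousWithinAt
    · exact fun t _ => ((hP' t).differentiableAt).differentiableWithinAt
    · intro t ht
      rw [interior_Icc] at ht
      rw [(hP' t).deriv]
      have := hAbound t ⟨le_of_lt ht.1, le_of_lt ht.2⟩
      linarith
  have hP0 : P 0 = 0 := by simp [hP, hc, hF0]
  have hPpos : ∀ t ∈ Set.Icc (0:ℝ) 1, 0 ≤ P t := by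
    intro t ht
    have := hPmono (Set.left_mem_Icc.mpr zero_le_one) ht ht.1
    rw [hP0] at this; exact this
  set Q : ℝ → ℝ := fun t => L (c t) - δ/4 * ‖h‖^2 * t^2 with hQ
  have hQ' : ∀ t : ℝ, HasDerivAt Q (P t) t := by
    intro t
    have h2 : HasDerivAt (fun t : ℝ => δ/4 * ‖h‖^2 * t^2) (δ/2 * ‖h‖^2 * t) t := by
      have := (hasDerivAt_pow 2 t).const_mul (δ/4 * ‖h‖^2)
      exact this.congr_deriv (by push_cast; ring)
    exact (hphi t).sub h2
  have hQmono : MonotoneOn Q (Set.Icc 0 1) := by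
    apply monotoneOn_of_deriv_nonneg (convex_Icc 0 1)
    · exact fun t _ => ((hQ' t).continuousAt).continuousWithinAt
    · exact fun t _ => ((hQ' t).differentiableAt).differentiableWithinAt
    · intro t ht
      rw [interior_Icc] at ht
      rw [(hQ' t).deriv]
      exact hPpos t ⟨le_of_lt ht.1, le_of_lt ht.2⟩
  have hfin := hQmono (Set.left_mem_Icc.mpr zero_le_one)
    (Set.right_mem_Icc.mpr zero_le_one) zero_le_one
  have hc0 : c 0 = e := by simp [hc]
  have hc1 : c 1 = z := by simp [hc, hh]
  simp only [hQ, hc0, hc1] at hfin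
  norm_num at hfin
  linarith

/-- The dot-product with a fixed vector as a continuous linear map. -/
noncomputable def dotCLM {n : ℕ} (w : Vec n) : Vec n →L[ℝ] ℝ :=
  ∑ i, w i • ContinuousLinearMap.proj i

@[simp] lemma dotCLM_apply {n : ℕ} (w v : Vec n) : dotCLM w v = w ⬝ᵥ v := by
  simp [dotCLM, dotProduct, ContinuousLinearMap.sum_apply]


lemma kinfQuad (d : ℝ) (hd : 0 < d) : KInf (fun s : ℝ => d / 4 * s ^ 2) := by
  refine ⟨Continuous.continuousOn (by fun_prop), ?_, by norm_num, ?_, ?_⟩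
  · intro x hx y hy hxy
    simp only [Set.mem_Ici] at hx hy
    have hsq : x ^ 2 < y ^ 2 := by nlinarith
    have h4 : 0 < d / 4 := by linarith
    exact mul_lt_mul_of_pos_left hsq h4
  · intro s _
    positivity
  · intro M
    refine ⟨Real.sqrt ((|M| + 1) * 4 / d), Real.sqrt_nonneg _, ?_⟩
    show M < d / 4 * Real.sqrt ((|M| + 1) * 4 / d) ^ 2
    rw [Real.sq_sqrt (by positivity)]
    have hval : d / 4 * ((|M| + 1) * 4 / d) = |M| + 1 := by field_simp
    rw [hval]
    linarith [le_abs_self M]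

end Aux

set_option maxHeartbeats 1600000

/-- Theorem 4.6: under twice continuous differentiability, strict
dissipativity for `ℓ₁`, `ℓ₂`, optimal equilibria in the interior of `Y` with Lagrange
multipliers `ν_μ`, and the Hessian conditions at the optimal equilibria, the system is locally
strictly dissipative for `ℓ_μ` at `(xᵉ_μ,uᵉ_μ)` for every `μ ∈ [0,1]` with storage function
`λ_μ(x) = μλ₁(x) + (1-μ)λ₂(x) + λ̃_μᵀx`. -/
theorem stmt13 {n m : ℕ} (f : Vec n × Vec m → Vec n) (Y : Set (Vec n × Vec m))
    (hf : ContDiff ℝ 2 f)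
    (ℓ₁ ℓ₂ : Vec n × Vec m → ℝ) (hℓ₁ : ContDiff ℝ 2 ℓ₁) (hℓ₂ : ContDiff ℝ 2 ℓ₂)
    (xe₁ : Vec n) (ue₁ : Vec m) (xe₂ : Vec n) (ue₂ : Vec m)
    (lam₁ lam₂ : Vec n → ℝ) (hlam₁ : ContDiff ℝ 2 lam₁) (hlam₂ : ContDiff ℝ 2 lam₂)
    (hd₁ : ∃ α, StrictDissipativeWith f Y ℓ₁ xe₁ ue₁ lam₁ α)
    (hd₂ : ∃ α, StrictDissipativeWith f Y ℓ₂ xe₂ ue₂ lam₂ α)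
    (lt₁ lt₂ : Vec n × Vec m → ℝ)
    (hlt₁ : lt₁ = fun z => ℓ₁ z - ℓ₁ (xe₁, ue₁) + lam₁ z.1 - lam₁ (f z))
    (hlt₂ : lt₂ = fun z => ℓ₂ z - ℓ₂ (xe₂, ue₂) + lam₂ z.1 - lam₂ (f z))
    (xe : ℝ → Vec n) (ue : ℝ → Vec m)
    (hopt : ∀ μ ∈ Icc (0 : ℝ) 1, (xe μ, ue μ) ∈ Y ∧ f (xe μ, ue μ) = xe μ ∧
      ∀ z ∈ Y, f z = z.1 →
        μ * ℓ₁ (xe μ, ue μ) + (1 - μ) * ℓ₂ (xe μ, ue μ) ≤ μ * ℓ₁ z + (1 - μ) * ℓ₂ z)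
    (hint : ∀ μ ∈ Icc (0 : ℝ) 1, (xe μ, ue μ) ∈ interior Y)
    (ν : ℝ → Vec n)
    (hKKT : ∀ μ ∈ Icc (0 : ℝ) 1,
      fderiv ℝ (fun z : Vec n × Vec m =>
        μ * ℓ₁ z + (1 - μ) * ℓ₂ z + ν μ ⬝ᵥ (z.1 - f z)) (xe μ, ue μ) = 0)
    (grad₁ grad₂ : Vec n → Vec n)
    (hgrad₁ : ∀ x v, fderiv ℝ lam₁ x v = grad₁ x ⬝ᵥ v)
    (hgrad₂ : ∀ x v, fderiv ℝ lam₂ x v = grad₂ x ⬝ᵥ v)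
    (tlam : ℝ → Vec n)
    (htlam : ∀ μ, tlam μ = ν μ - μ • grad₁ (xe μ) - (1 - μ) • grad₂ (xe μ))
    (m₁ m₂ : ℝ → ℝ)
    (hm : ∀ μ ∈ Icc (0 : ℝ) 1, 0 ≤ m₁ μ ∧ m₁ μ < m₂ μ)
    (hH₂ : ∀ μ ∈ Icc (0 : ℝ) 1, ∀ v : Vec n × Vec m,
      m₂ μ * ‖v‖ ^ 2 ≤ Hess (fun z => μ * lt₁ z + (1 - μ) * lt₂ z) (xe μ, ue μ) v)
    (hH₁ : ∀ μ ∈ Icc (0 : ℝ) 1, ∀ v : Vec n × Vec m,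
      Hess (fun z => tlam μ ⬝ᵥ f z) (xe μ, ue μ) v ≤ m₁ μ * ‖v‖ ^ 2) :
    ∀ μ ∈ Icc (0 : ℝ) 1, ∃ N : Set (Vec n × Vec m), N ∈ nhds (xe μ, ue μ) ∧
      ∃ α, StrictDissipativeWith f (closure N) (fun z => μ * ℓ₁ z + (1 - μ) * ℓ₂ z)
        (xe μ) (ue μ) (fun x => μ * lam₁ x + (1 - μ) * lam₂ x + tlam μ ⬝ᵥ x) α := by
  intro μ hμ
  obtain ⟨hmemY, hfe, -⟩ := hopt μ hμ
  -- the storage and stage costs for parameter μ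
  set lamμ : Vec n → ℝ := fun x => μ * lam₁ x + (1 - μ) * lam₂ x + tlam μ ⬝ᵥ x with hlamμdef
  set S : Vec n × Vec m → ℝ := fun z => μ * lt₁ z + (1 - μ) * lt₂ z with hSdef
  set T : Vec n × Vec m → ℝ := fun z => tlam μ ⬝ᵥ f z with hTdef
  set Pc : (Vec n × Vec m) →L[ℝ] ℝ :=
    (dotCLM (tlam μ)).comp (ContinuousLinearMap.fst ℝ (Vec n) (Vec m)) with hPcdef
  set L : Vec n × Vec m → ℝ := fun z => S z + (Pc z - T z) with hLdef
  -- smoothness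
  have hlt₁c : ContDiff ℝ 2 lt₁ := by
    rw [hlt₁]
    exact ((hℓ₁.sub contDiff_const).add (hlam₁.comp contDiff_fst)).sub (hlam₁.comp hf)
  have hlt₂c : ContDiff ℝ 2 lt₂ := by
    rw [hlt₂]
    exact ((hℓ₂.sub contDiff_const).add (hlam₂.comp contDiff_fst)).sub (hlam₂.comp hf)
  have hSc : ContDiff ℝ 2 S := (contDiff_const.mul hlt₁c).add (contDiff_const.mul hlt₂c)
  have hTeq : T = fun z => dotCLM (tlam μ) (f z) := by funext z; simp [hTdef]
  have hTc : ContDiff ℝ 2 T := by rw [hTeq]; exact (dotCLM (tlam μ)).contDiff.comp hf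
  have hLc : ContDiff ℝ 2 L := hSc.add (Pc.contDiff.sub hTc)
  -- the KKT function
  set K : Vec n × Vec m → ℝ :=
    fun z => μ * ℓ₁ z + (1 - μ) * ℓ₂ z + ν μ ⬝ᵥ (z.1 - f z) with hKdef
  have hKc : ContDiff ℝ 2 K := by
    have hdot : ContDiff ℝ 2 (fun z : Vec n × Vec m => ν μ ⬝ᵥ (z.1 - f z)) := by
      have : (fun z : Vec n × Vec m => ν μ ⬝ᵥ (z.1 - f z))
          = fun z : Vec n × Vec m => dotCLM (ν μ) (z.1 - f z) := by
        funext z; rw [dotCLM_apply]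
      rw [this]
      exact (dotCLM (ν μ)).contDiff.comp (contDiff_fst.sub hf)
    exact ((contDiff_const.mul hℓ₁).add (contDiff_const.mul hℓ₂)).add hdot
  have hK : HasFDerivAt K (0 : (Vec n × Vec m) →L[ℝ] ℝ) (xe μ, ue μ) := by
    have h0 := ((hKc.differentiable two_ne_zero) (xe μ, ue μ)).hasFDerivAt
    rwa [hKKT μ hμ] at h0
  -- the correction term R and the decomposition L = K + R - cst
  set R : Vec n × Vec m → ℝ := fun z =>
    μ * (lam₁ z.1 - lam₁ (f z)) + (1 - μ) * (lam₂ z.1 - lam₂ (f z))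
      + (tlam μ - ν μ) ⬝ᵥ (z.1 - f z) with hRdef
  set cst : ℝ := μ * ℓ₁ (xe₁, ue₁) + (1 - μ) * ℓ₂ (xe₂, ue₂) with hcstdef
  have hLKR : L = fun z => K z + R z - cst := by
    funext z
    simp only [hLdef, hSdef, hKdef, hRdef, hcstdef, hPcdef, hlt₁, hlt₂,
      ContinuousLinearMap.comp_apply, ContinuousLinearMap.coe_fst', dotCLM_apply, hTdef,
      sub_dotProduct, dotProduct_sub]
    ring
  -- derivative of R at the equilibrium vanishes
  set Df : (Vec n × Vec m) →L[ℝ] Vec n := fderiv ℝ f (xe μ, ue μ) with hDfdef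
  have hDf : HasFDerivAt f Df (xe μ, ue μ) :=
    ((hf.differentiable two_ne_zero) (xe μ, ue μ)).hasFDerivAt
  set D₁ : Vec n →L[ℝ] ℝ := fderiv ℝ lam₁ (xe μ) with hD₁def
  set D₂ : Vec n →L[ℝ] ℝ := fderiv ℝ lam₂ (xe μ) with hD₂def
  have h1 : HasFDerivAt (fun z : Vec n × Vec m => lam₁ z.1)
      (D₁.comp (ContinuousLinearMap.fst ℝ (Vec n) (Vec m))) (xe μ, ue μ) :=
    (((hlam₁.differentiable two_ne_zero) (xe μ)).hasFDerivAt).comp (xe μ, ue μ) hasFDerivAt_fst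
  have h2 : HasFDerivAt (fun z : Vec n × Vec m => lam₁ (f z)) (D₁.comp Df) (xe μ, ue μ) := by
    have h0 := (((hlam₁.differentiable two_ne_zero) (f (xe μ, ue μ))).hasFDerivAt).comp
      (xe μ, ue μ) hDf
    rwa [hfe] at h0
  have h3 : HasFDerivAt (fun z : Vec n × Vec m => lam₂ z.1)
      (D₂.comp (ContinuousLinearMap.fst ℝ (Vec n) (Vec m))) (xe μ, ue μ) :=
    (((hlam₂.differentiable two_ne_zero) (xe μ)).hasFDerivAt).comp (xe μ, ue μ) hasFDerivAt_fst
  have h4 : HasFDerivAt (fun z : Vec n × Vec m => lam₂ (f z)) (D₂.comp Df) (xe μ, ue μ) := by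
    have h0 := (((hlam₂.differentiable two_ne_zero) (f (xe μ, ue μ))).hasFDerivAt).comp
      (xe μ, ue μ) hDf
    rwa [hfe] at h0
  have h5 : HasFDerivAt (fun z : Vec n × Vec m => (tlam μ - ν μ) ⬝ᵥ (z.1 - f z))
      ((dotCLM (tlam μ - ν μ)).comp
        (ContinuousLinearMap.fst ℝ (Vec n) (Vec m) - Df)) (xe μ, ue μ) := by
    have hin : HasFDerivAt (fun z : Vec n × Vec m => z.1 - f z)
        (ContinuousLinearMap.fst ℝ (Vec n) (Vec m) - Df) (xe μ, ue μ) :=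
      hasFDerivAt_fst.sub hDf
    have h0 := ((dotCLM (tlam μ - ν μ)).hasFDerivAt).comp (xe μ, ue μ) hin
    have he : (fun z : Vec n × Vec m => (tlam μ - ν μ) ⬝ᵥ (z.1 - f z))
        = (dotCLM (tlam μ - ν μ)) ∘ (fun z : Vec n × Vec m => z.1 - f z) := by
      funext z; simp [Function.comp]
    rw [he]
    exact h0
  set DR : (Vec n × Vec m) →L[ℝ] ℝ :=
    μ • (D₁.comp (ContinuousLinearMap.fst ℝ (Vec n) (Vec m)) - D₁.comp Df)
    + (1 - μ) • (D₂.comp (ContinuousLinearMap.fst ℝ (Vec n) (Vec m)) - D₂.comp Df)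
    + (dotCLM (tlam μ - ν μ)).comp (ContinuousLinearMap.fst ℝ (Vec n) (Vec m) - Df)
    with hDRdef
  have hR : HasFDerivAt R DR (xe μ, ue μ) :=
    (((h1.sub h2).const_mul μ).add ((h3.sub h4).const_mul (1 - μ))).add h5
  have hDR0 : DR = 0 := by
    refine ContinuousLinearMap.ext fun v => ?_
    simp only [hDRdef, ContinuousLinearMap.add_apply, ContinuousLinearMap.smul_apply,
      ContinuousLinearMap.sub_apply, ContinuousLinearMap.comp_apply,
      ContinuousLinearMap.coe_fst', dotCLM_apply, ContinuousLinearMap.zero_apply,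
      smul_eq_mul, hD₁def, hD₂def, hgrad₁, hgrad₂]
    rw [htlam]
    simp only [sub_dotProduct, smul_dotProduct, dotProduct_sub,
      smul_eq_mul]
    ring
  have hL0 : fderiv ℝ L (xe μ, ue μ) = 0 := by
    have hRd : HasFDerivAt R (0 : (Vec n × Vec m) →L[ℝ] ℝ) (xe μ, ue μ) := hDR0 ▸ hR
    have hLd : HasFDerivAt L ((0 : (Vec n × Vec m) →L[ℝ] ℝ) + 0) (xe μ, ue μ) := by
      rw [hLKR]; exact (hK.add hRd).sub_const cst
    simpa using hLd.fderiv
  -- Hessian of L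
  have hFL : fderiv ℝ L = fun z => fderiv ℝ S z + (Pc - fderiv ℝ T z) := by
    funext z
    have hS' := ((hSc.differentiable two_ne_zero) z).hasFDerivAt
    have hT' := ((hTc.differentiable two_ne_zero) z).hasFDerivAt
    rw [hLdef]
    exact (hS'.add (Pc.hasFDerivAt.sub hT')).fderiv
  have hSd : DifferentiableAt ℝ (fderiv ℝ S) (xe μ, ue μ) :=
    ((hSc.fderiv_right (by norm_num)).differentiable one_ne_zero) (xe μ, ue μ)
  have hTd : DifferentiableAt ℝ (fderiv ℝ T) (xe μ, ue μ) :=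
    ((hTc.fderiv_right (by norm_num)).differentiable one_ne_zero) (xe μ, ue μ)
  have hAL : fderiv ℝ (fderiv ℝ L) (xe μ, ue μ)
      = fderiv ℝ (fderiv ℝ S) (xe μ, ue μ) - fderiv ℝ (fderiv ℝ T) (xe μ, ue μ) := by
    rw [hFL]
    have hsum : HasFDerivAt (fun z => fderiv ℝ S z + (Pc - fderiv ℝ T z))
        (fderiv ℝ (fderiv ℝ S) (xe μ, ue μ) - fderiv ℝ (fderiv ℝ T) (xe μ, ue μ)) (xe μ, ue μ) := by
      have := hSd.hasFDerivAt.add ((hasFDerivAt_const Pc (xe μ, ue μ)).sub hTd.hasFDerivAt)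
      rw [zero_sub, ← sub_eq_add_neg] at this
      exact this
    exact hsum.fderiv
  set δ : ℝ := m₂ μ - m₁ μ with hδdef
  have hδ : 0 < δ := by have := hm μ hμ; simp [hδdef]; linarith [this.2]
  have hHess : ∀ v, δ * ‖v‖ ^ 2 ≤ fderiv ℝ (fderiv ℝ L) (xe μ, ue μ) v v := by
    intro v
    have h2 := hH₂ μ hμ v
    have h1 := hH₁ μ hμ v
    rw [← hSdef] at h2
    rw [← hTdef] at h1
    simp only [Hess] at h1 h2
    rw [hAL]
    simp only [ContinuousLinearMap.sub_apply]
    have : 0 ≤ ‖v‖ ^ 2 := sq_nonneg _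
    rw [hδdef]
    nlinarith
  obtain ⟨r, hr, hquad⟩ := quadLower L hLc (xe μ, ue μ) δ hδ hL0 hHess
  refine ⟨Metric.ball (xe μ, ue μ) r, Metric.ball_mem_nhds _ hr, fun s => δ / 4 * s ^ 2, ?_⟩
  have hsub : closure (Metric.ball (xe μ, ue μ) r) ⊆ Metric.closedBall (xe μ, ue μ) r :=
    Metric.closure_ball_subset_closedBall
  have hlamμcont : Continuous lamμ := by
    have heq : lamμ = fun x => μ * lam₁ x + (1 - μ) * lam₂ x + dotCLM (tlam μ) x := by
      funext x; simp [hlamμdef]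
    rw [heq]
    exact ((continuous_const.mul hlam₁.continuous).add
      (continuous_const.mul hlam₂.continuous)).add (dotCLM (tlam μ)).continuous
  -- the key algebraic identity
  have key : ∀ z : Vec n × Vec m,
      (μ * ℓ₁ z + (1 - μ) * ℓ₂ z) - (μ * ℓ₁ (xe μ, ue μ) + (1 - μ) * ℓ₂ (xe μ, ue μ))
        + lamμ z.1 - lamμ (f z) = L z - L (xe μ, ue μ) := by
    intro z
    simp only [hLdef, hSdef, hTdef, hPcdef, hlamμdef, hlt₁, hlt₂,
      ContinuousLinearMap.comp_apply, ContinuousLinearMap.coe_fst', dotCLM_apply, hfe]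
    ring
  have hδ4 : (0:ℝ) ≤ δ / 4 := le_of_lt (div_pos hδ (by norm_num))
  clear_value lamμ S T Pc L K R DR Df D₁ D₂ δ cst
  clear hDR0 hR h1 h2 h3 h4 h5 hDf hK hKc hL0 hFL hSd hTd hAL hHess hlt₁c hlt₂c hSc hTc hTeq hLc
    hSdef hTdef hPcdef hLdef hKdef hRdef hDRdef hcstdef hDfdef hD₁def hD₂def hδdef hlamμdef
    hLKR S T Pc K R DR Df D₁ D₂ cst
    hd₁ hd₂ hopt hint hKKT hgrad₁ hgrad₂ htlam hm hH₂ hH₁ hlt₁ hlt₂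
  constructor
  · refine ⟨subset_closure (Metric.mem_ball_self hr), hfe, ?_, ?_, ?_⟩
    · -- bounded on bounded subsets
      intro S' hS' hb
      have hcS : IsCompact (closure S') :=
        Metric.isCompact_of_isClosed_isBounded isClosed_closure hb.closure
      exact ((hcS.image hlamμcont).isBounded).subset
        (Set.image_mono subset_closure)
    · -- KInf
      exact kinfQuad δ hδ
    · -- the dissipation inequality
      intro z hz _
      rw [ge_iff_le, key z]
      have hz' : z ∈ Metric.closedBall (xe μ, ue μ) r := hsub hz
      have hq := hquad z hz'
      have hfst : ‖z.1 - xe μ‖ ≤ ‖z - (xe μ, ue μ)‖ := by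
        have : z.1 - xe μ = (z - (xe μ, ue μ)).1 := rfl
        rw [this]
        exact norm_fst_le _
      have hsq : ‖z.1 - xe μ‖ ^ 2 ≤ ‖z - (xe μ, ue μ)‖ ^ 2 :=
        pow_le_pow_left₀ (norm_nonneg _) hfst 2
      calc δ / 4 * ‖z.1 - xe μ‖ ^ 2 ≤ δ / 4 * ‖z - (xe μ, ue μ)‖ ^ 2 :=
            mul_le_mul_of_nonneg_left hsq hδ4
        _ ≤ L z - L (xe μ, ue μ) := hq
  · -- bounded below
    have hsubset : stateSet (closure (Metric.ball (xe μ, ue μ) r))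
        ⊆ Prod.fst '' (Metric.closedBall (xe μ, ue μ) r) := by
      rintro x ⟨u, hu⟩
      exact ⟨(x, u), hsub hu, rfl⟩
    have hcomp : IsCompact (lamμ '' (Prod.fst '' (Metric.closedBall (xe μ, ue μ) r))) :=
      ((isCompact_closedBall _ _).image continuous_fst).image hlamμcont
    exact BddBelow.mono (Set.image_mono hsubset) hcomp.bddBelow
end

section
/- Let g : ℝᵏ → ℝ be continuous and strictly convex with g(z*) = 0 for some z* ∈ ℝᵏ and g(z) > 0 for all z ≠ z*. Then g is radially unbounded (g(z) → ∞ as ‖z‖ → ∞) and there exists a class-K∞ function α such that g(z) ≥ α(‖z − z*‖) for all z ∈ ℝᵏ. -/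
open Set

/-- used in the proof of Theorem 4.10, cf. [Baker2016] and
[Khalil, Lemma 4.3]: a continuous, strictly convex, positive definite function is radially
unbounded and admits a class-`K∞` lower bound. -/
theorem stmt17 {k : ℕ} (g : (Fin k → ℝ) → ℝ) (hg : Continuous g)
    (hconv : StrictConvexOn ℝ univ g)
    (zstar : Fin k → ℝ) (hz : g zstar = 0)
    (hpos : ∀ z : Fin k → ℝ, z ≠ zstar → 0 < g z) :
    (∀ M : ℝ, ∃ R : ℝ, ∀ z : Fin k → ℝ, R ≤ ‖z‖ → M ≤ g z) ∧
      ∃ α : ℝ → ℝ, KInf α ∧ ∀ z : Fin k → ℝ, α ‖z - zstar‖ ≤ g z := by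
  have hgnn : ∀ z, 0 ≤ g z := by
    intro z
    rcases eq_or_ne z zstar with rfl | h
    · exact le_of_eq hz.symm
    · exact (hpos z h).le
  rcases Nat.eq_zero_or_pos k with hk | hk
  · -- degenerate case k = 0 : the space is a single point
    subst hk
    have hzz : ∀ z : Fin 0 → ℝ, z = zstar := fun z => Subsingleton.elim z zstar
    have hnorm0 : ∀ z : Fin 0 → ℝ, ‖z‖ = 0 := by
      intro z
      have : z = 0 := Subsingleton.elim z 0
      simp [this]
    constructor
    · intro M
      refine ⟨1, fun z hz' => ?_⟩
      rw [hnorm0 z] at hz'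
      linarith
    · refine ⟨id, ⟨continuousOn_id, fun a _ b _ h => h, rfl, fun r hr => hr, fun M =>
        ⟨max M 0 + 1, ?_, ?_⟩⟩, fun z => ?_⟩
      · have : (0:ℝ) ≤ max M 0 := le_max_right M 0
        simpa using by linarith
      · have : M ≤ max M 0 := le_max_left M 0
        simpa using by linarith
      · rw [hzz z]
        simp [hz, hnorm0]
  -- main case k ≥ 1
  haveI : Nonempty (Fin k) := ⟨⟨0, hk⟩⟩
  set u₀ : Fin k → ℝ := fun _ => (1 : ℝ) with hu₀def
  have hu₀ : ‖u₀‖ = 1 := by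
    rw [hu₀def]
    simpa using (Pi.norm_const (1:ℝ))
  -- minimum of g on the unit sphere around zstar
  have hsph : (Metric.sphere zstar 1).Nonempty := by
    refine ⟨zstar + u₀, ?_⟩
    simp [Metric.mem_sphere, dist_eq_norm, hu₀]
  obtain ⟨w, hw, hwmin⟩ := (isCompact_sphere zstar 1).exists_isMinOn hsph hg.continuousOn
  set c : ℝ := g w with hcdef
  have hwne : w ≠ zstar := by
    intro h
    rw [Metric.mem_sphere, h, dist_self] at hw
    norm_num at hw
  have hc : 0 < c := hpos w hwne
  -- convexity lower bound far away
  have L1 : ∀ z : Fin k → ℝ, 1 ≤ ‖z - zstar‖ → c * ‖z - zstar‖ ≤ g z := by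
    intro z hr
    set r : ℝ := ‖z - zstar‖ with hrdef
    have hr0 : 0 < r := lt_of_lt_of_le one_pos hr
    set w' : Fin k → ℝ := (1 - r⁻¹) • zstar + r⁻¹ • z with hw'def
    have hw'sph : w' ∈ Metric.sphere zstar 1 := by
      rw [Metric.mem_sphere, dist_eq_norm]
      have : w' - zstar = r⁻¹ • (z - zstar) := by
        rw [hw'def]
        module
      rw [this, norm_smul, ← hrdef]
      rw [Real.norm_eq_abs, abs_of_pos (inv_pos.mpr hr0)]
      field_simp
    have hconvex : g ((1 - r⁻¹) • zstar + r⁻¹ • z) ≤ (1 - r⁻¹) * g zstar + r⁻¹ * g z :=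
      hconv.convexOn.2 (mem_univ zstar) (mem_univ z) (by
        have : r⁻¹ ≤ 1 := by
          rw [inv_le_one_iff₀]; right; exact hr
        linarith) (le_of_lt (inv_pos.mpr hr0)) (by ring)
    have h1 : c ≤ g w' := hwmin hw'sph
    rw [← hw'def] at hconvex
    rw [hz] at hconvex
    have h2 : g w' ≤ r⁻¹ * g z := by linarith [hconvex]
    have := le_trans h1 h2
    calc c * r ≤ (r⁻¹ * g z) * r := by nlinarith
    _ = g z := by field_simp
  -- the infimum function ψ
  set S : ℝ → Set (Fin k → ℝ) := fun r => {z | r ≤ ‖z - zstar‖} with hSdef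
  have hSne : ∀ r : ℝ, ((g '' S r)).Nonempty := by
    intro r
    refine ⟨g (zstar + (max r 1) • u₀), ⟨zstar + (max r 1) • u₀, ?_, rfl⟩⟩
    have : zstar + (max r 1) • u₀ - zstar = (max r 1) • u₀ := by module
    simp only [hSdef, mem_setOf_eq, this, norm_smul, hu₀, Real.norm_eq_abs]
    rw [abs_of_pos (lt_of_lt_of_le one_pos (le_max_right r 1))]
    simpa using le_max_left r 1
  have hSbdd : ∀ r : ℝ, BddBelow (g '' S r) := by
    intro r
    exact ⟨0, fun y ⟨z, _, hzy⟩ => hzy ▸ hgnn z⟩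
  set ψ : ℝ → ℝ := fun r => sInf (g '' S r) with hψdef
  have hψ_le : ∀ z : Fin k → ℝ, ψ ‖z - zstar‖ ≤ g z := by
    intro z
    exact csInf_le (hSbdd _) ⟨z, by simp [hSdef], rfl⟩
  have hψ_nonneg : ∀ r, 0 ≤ ψ r := by
    intro r
    exact le_csInf (hSne r) (fun y ⟨z, _, hzy⟩ => hzy ▸ hgnn z)
  have hψ_mono : Monotone ψ := by
    intro r s hrs
    exact csInf_le_csInf (hSbdd r) (hSne s) (image_mono (fun z hzs => le_trans hrs hzs))
  have hψ_big : ∀ r : ℝ, 1 ≤ r → c * r ≤ ψ r := by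
    intro r hr
    refine le_csInf (hSne r) ?_
    rintro y ⟨z, hzS, rfl⟩
    simp only [hSdef, mem_setOf_eq] at hzS
    have hz1 : 1 ≤ ‖z - zstar‖ := le_trans hr hzS
    calc c * r ≤ c * ‖z - zstar‖ := by nlinarith
    _ ≤ g z := L1 z hz1
  have hψ_pos : ∀ r : ℝ, 0 < r → 0 < ψ r := by
    intro r hr
    rcases le_or_gt 1 r with h1 | h1
    · exact lt_of_lt_of_le (by positivity) (hψ_big r h1)
    · -- annulus argument
      set A : Set (Fin k → ℝ) := Metric.closedBall zstar 1 \ Metric.ball zstar r with hAdef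
      have hAcomp : IsCompact A := (isCompact_closedBall zstar 1).diff Metric.isOpen_ball
      have hAne : A.Nonempty := by
        refine ⟨zstar + u₀, ?_, ?_⟩
        · simp [Metric.mem_closedBall, dist_eq_norm, show zstar + u₀ - zstar = u₀ by module, hu₀]
        · simp only [Metric.mem_ball, dist_eq_norm, show zstar + u₀ - zstar = u₀ by module, hu₀]
          linarith
      obtain ⟨w₂, hw₂A, hw₂min⟩ := hAcomp.exists_isMinOn hAne hg.continuousOn
      have hw₂ne : w₂ ≠ zstar := by
        intro h
        have := hw₂A.2
        rw [h] at this
        exact this (Metric.mem_ball_self hr)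
      have hm : 0 < g w₂ := hpos w₂ hw₂ne
      have : min (g w₂) c ≤ ψ r := by
        refine le_csInf (hSne r) ?_
        rintro y ⟨z, hzS, rfl⟩
        simp only [hSdef, mem_setOf_eq] at hzS
        rcases le_or_gt ‖z - zstar‖ 1 with h2 | h2
        · refine le_trans (min_le_left _ _) (hw₂min ⟨?_, ?_⟩)
          · simpa [Metric.mem_closedBall, dist_eq_norm] using h2
          · simp only [Metric.mem_ball, dist_eq_norm, not_lt]
            exact hzS
        · refine le_trans (min_le_right _ _) ?_
          calc c = c * 1 := (mul_one c).symm
          _ ≤ c * ‖z - zstar‖ := by nlinarith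
          _ ≤ g z := L1 z h2.le
      exact lt_of_lt_of_le (lt_min hm hc) this
  -- the primitive Φ
  set Φ : ℝ → ℝ := fun r => ∫ t in (0:ℝ)..r, ψ t with hΦdef
  have hint : ∀ a b : ℝ, IntervalIntegrable ψ MeasureTheory.volume a b :=
    fun a b => hψ_mono.intervalIntegrable
  have hΦcont : Continuous Φ := intervalIntegral.continuous_primitive hint 0
  have hΦ0 : Φ 0 = 0 := intervalIntegral.integral_same
  have hΦdiff : ∀ a b : ℝ, Φ b - Φ a = ∫ t in a..b, ψ t := by
    intro a b
    have := intervalIntegral.integral_add_adjacent_intervals (hint 0 a) (hint a b)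
    simp only [hΦdef]
    linarith [this]
  have hΦ_lb : ∀ a b : ℝ, a ≤ b → (b - a) * ψ a ≤ Φ b - Φ a := by
    intro a b hab
    rw [hΦdiff a b]
    have := intervalIntegral.integral_mono_on hab (intervalIntegrable_const (c := ψ a))
      (hint a b) (fun x hx => hψ_mono hx.1)
    simpa [smul_eq_mul, mul_comm] using this
  have hΦ_ub : ∀ a b : ℝ, a ≤ b → Φ b - Φ a ≤ (b - a) * ψ b := by
    intro a b hab
    rw [hΦdiff a b]
    have := intervalIntegral.integral_mono_on hab (hint a b)
      (intervalIntegrable_const (c := ψ b)) (fun x hx => hψ_mono hx.2)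
    simpa [smul_eq_mul, mul_comm] using this
  have hΦ_nonneg : ∀ r : ℝ, 0 ≤ r → 0 ≤ Φ r := by
    intro r hr
    have := hΦ_lb 0 r hr
    nlinarith [hψ_nonneg 0]
  have hΦ_le : ∀ r : ℝ, 0 ≤ r → Φ r ≤ r * ψ r := by
    intro r hr
    have := hΦ_ub 0 r hr
    rw [hΦ0] at this
    linarith
  have hΦ_pos : ∀ r : ℝ, 0 < r → 0 < Φ r := by
    intro r hr
    have h1 := hΦ_lb (r/2) r (by linarith)
    have h2 := hΦ_nonneg (r/2) (by linarith)
    have h3 := hψ_pos (r/2) (by linarith)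
    nlinarith
  set α : ℝ → ℝ := fun r => Φ r / (1 + r) with hαdef
  refine ⟨?_, α, ⟨?_, ?_, ?_, ?_, ?_⟩, ?_⟩
  · -- radial unboundedness
    intro M
    refine ⟨‖zstar‖ + 1 + |M| / c, fun z hzR => ?_⟩
    have hzn : ‖z - zstar‖ ≥ 1 + |M| / c := by
      have := norm_sub_norm_le z zstar
      calc 1 + |M| / c = (‖zstar‖ + 1 + |M| / c) - ‖zstar‖ := by ring
      _ ≤ ‖z‖ - ‖zstar‖ := by linarith
      _ ≤ ‖z - zstar‖ := norm_sub_norm_le z zstar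
    have h1 : 1 ≤ ‖z - zstar‖ := by
      have : 0 ≤ |M| / c := div_nonneg (abs_nonneg M) hc.le
      linarith
    have := L1 z h1
    have hM : M ≤ |M| := le_abs_self M
    have : c * (1 + |M| / c) ≤ g z := by nlinarith
    have hcalc : c * (1 + |M| / c) = c + |M| := by field_simp
    rw [hcalc] at this
    linarith
  · -- continuity
    refine ContinuousOn.div hΦcont.continuousOn
      ((continuous_const.add continuous_id).continuousOn) ?_
    intro r hr
    simp only [mem_Ici] at hr
    positivity
  · -- strict monotonicity
    intro r hr s hs hrs
    simp only [mem_Ici] at hr hs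
    have hd1 : (0:ℝ) < 1 + r := by linarith
    have hd2 : (0:ℝ) < 1 + s := by linarith
    rw [hαdef]
    simp only
    rw [div_lt_div_iff₀ hd1 hd2]
    rcases eq_or_lt_of_le hr with h0 | h0
    · rw [← h0, hΦ0]
      have := hΦ_pos s (by linarith)
      nlinarith
    · have h1 := hΦ_lb r s hrs.le
      have h2 := hΦ_le r hr
      have h3 := hψ_pos r h0
      nlinarith
  · -- α 0 = 0
    simp [hαdef, hΦ0]
  · -- nonnegativity
    intro r hr
    simp only [mem_Ici] at hr
    exact div_nonneg (hΦ_nonneg r hr) (by linarith)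
  · -- unboundedness
    intro M
    set r : ℝ := max 1 (3 * (|M| + 1) / c) with hrdef
    have hr1 : 1 ≤ r := le_max_left _ _
    have hr2 : 3 * (|M| + 1) / c ≤ r := le_max_right _ _
    refine ⟨2 * r, by simp only [mem_Ici]; linarith, ?_⟩
    have hψr : c * r ≤ ψ r := hψ_big r hr1
    have hlb := hΦ_lb r (2 * r) (by linarith)
    have hΦr : 0 ≤ Φ r := hΦ_nonneg r (by linarith)
    have hΦ2r : c * r ^ 2 ≤ Φ (2 * r) := by nlinarith
    have hden : (0:ℝ) < 1 + 2 * r := by linarith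
    have key : c * r / 3 ≤ Φ (2 * r) / (1 + 2 * r) := by
      rw [div_le_div_iff₀ (by norm_num) hden]
      nlinarith [hΦ2r, mul_le_mul_of_nonneg_left hr1 (mul_nonneg hc.le (by linarith : (0:ℝ) ≤ r))]
    have hMr : M < c * r / 3 := by
      have : 3 * (|M| + 1) ≤ c * r := by
        have h := mul_le_mul_of_nonneg_left hr2 hc.le
        calc 3 * (|M| + 1) = c * (3 * (|M| + 1) / c) := by field_simp
        _ ≤ c * r := h
      have hM := le_abs_self M
      linarith
    exact lt_of_lt_of_le hMr key
  · -- lower bound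
    intro z
    set t : ℝ := ‖z - zstar‖ with htdef
    have ht : 0 ≤ t := norm_nonneg _
    have h1 : Φ t ≤ t * ψ t := hΦ_le t ht
    have h2 : ψ t ≤ g z := hψ_le z
    have h3 : 0 ≤ ψ t := hψ_nonneg t
    have : Φ t / (1 + t) ≤ ψ t := by
      rw [div_le_iff₀ (by linarith)]
      nlinarith
    exact le_trans this (le_trans (le_refl _) h2)
end

section
/- Let x⁺ = f(x,u) be a discrete-time control system with f continuous and let the constraint set Y ⊆ ℝⁿ × ℝᵐ be convex and compact. Let ℓ : Y → ℝ be a continuous, strictly convex stage cost whose unique global minimiser (x*,u*) over Y is an equilibrium, i.e. f(x*,u*) = x*. Then the system is strictly dissipative for the stage cost ℓ at (x*,u*) with the zero storage function λ ≡ 0, i.e. there exists a class-K∞ function α with ℓ(x,u) − ℓ(x*,u*) ≥ α(‖x − x*‖) for all (x,u) ∈ Y. -/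
open Set Bornology Matrix Filter

open intervalIntegral in
private lemma kinf_primitive (ρ : ℝ → ℝ) (hmono : Monotone ρ) (hnn : ∀ s, 0 ≤ ρ s)
    (hpos : ∀ s, 0 < s → 0 < ρ s) (c : ℝ) (hbd : ∀ s, ρ s ≤ c) :
    (ContinuousOn (fun r => ∫ s in (0:ℝ)..r, ρ s) (Ici 0) ∧
      StrictMonoOn (fun r => ∫ s in (0:ℝ)..r, ρ s) (Ici 0) ∧
      (∫ s in (0:ℝ)..(0:ℝ), ρ s) = 0 ∧
      (∀ r ∈ Ici (0:ℝ), 0 ≤ ∫ s in (0:ℝ)..r, ρ s) ∧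
      ∀ M : ℝ, ∃ r ∈ Ici (0:ℝ), M < ∫ s in (0:ℝ)..r, ρ s) ∧
    ∀ r, 0 ≤ r → (∫ s in (0:ℝ)..r, ρ s) ≤ r * ρ r := by
  have hint : ∀ a b : ℝ, IntervalIntegrable ρ MeasureTheory.volume a b :=
    fun a b => hmono.intervalIntegrable
  have hadd : ∀ a b : ℝ, (∫ s in (0:ℝ)..b, ρ s) - (∫ s in (0:ℝ)..a, ρ s)
      = ∫ s in a..b, ρ s := by
    intro a b
    have := integral_add_adjacent_intervals (hint 0 a) (hint a b)
    linarith
  have hcont : Continuous (fun r => ∫ s in (0:ℝ)..r, ρ s) := by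
    have hc0 : 0 ≤ c := le_trans (hnn 0) (hbd 0)
    apply (LipschitzWith.of_dist_le_mul (K := ⟨c, hc0⟩) ?_).continuous
    intro a b
    simp only [Real.dist_eq, NNReal.coe_mk]
    rw [hadd b a]
    calc |∫ s in b..a, ρ s| = ‖∫ s in b..a, ρ s‖ := rfl
      _ ≤ c * |a - b| := intervalIntegral.norm_integral_le_of_norm_le_const (fun x _ => by
          rw [Real.norm_eq_abs, abs_of_nonneg (hnn x)]; exact hbd x)
  have hmonoI : ∀ a b : ℝ, a ≤ b →
      (∫ s in (0:ℝ)..a, ρ s) ≤ ∫ s in (0:ℝ)..b, ρ s := by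
    intro a b hab
    have : 0 ≤ ∫ s in a..b, ρ s := integral_nonneg hab (fun x _ => hnn x)
    linarith [hadd a b]
  have hsm : StrictMonoOn (fun r => ∫ s in (0:ℝ)..r, ρ s) (Ici 0) := by
    intro a ha b hb hab
    simp only
    have hm : 0 < (a + b) / 2 := by simp at ha; linarith
    have h1 : (∫ s in (0:ℝ)..a, ρ s) ≤ ∫ s in (0:ℝ)..((a+b)/2), ρ s :=
      hmonoI a _ (by linarith)
    have h2 : ((b - (a+b)/2)) * ρ ((a+b)/2) ≤ ∫ s in ((a+b)/2)..b, ρ s := by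
      have := intervalIntegral.integral_mono_on (by linarith : (a+b)/2 ≤ b)
        (intervalIntegrable_const) (hint _ _)
        (fun x hx => hmono hx.1)
      simpa using this
    have h3 := hadd ((a+b)/2) b
    have h4 : 0 < (b - (a+b)/2) * ρ ((a+b)/2) := by
      apply mul_pos (by linarith) (hpos _ hm)
    linarith
  have hle : ∀ r, 0 ≤ r → (∫ s in (0:ℝ)..r, ρ s) ≤ r * ρ r := by
    intro r hr
    have := intervalIntegral.integral_mono_on hr (hint 0 r) intervalIntegrable_const
      (fun x hx => hmono hx.2)
    simpa [mul_comm] using this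
  refine ⟨⟨hcont.continuousOn, hsm, by simp, fun r hr => by
      simpa using hmonoI 0 r hr, ?_⟩, hle⟩
  intro M
  have hρ1 : 0 < ρ 1 := hpos 1 one_pos
  obtain ⟨r, hrdef⟩ : ∃ r : ℝ, r = 1 + (|M| + 1) / ρ 1 := ⟨_, rfl⟩
  have hdiv : 0 ≤ (|M| + 1) / ρ 1 := div_nonneg (by positivity) hρ1.le
  have hr1 : (1:ℝ) ≤ r := by rw [hrdef]; linarith
  refine ⟨r, by simp only [mem_Ici]; linarith, ?_⟩
  have h2 : ((r - 1)) * ρ 1 ≤ ∫ s in (1:ℝ)..r, ρ s := by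
    have := intervalIntegral.integral_mono_on hr1 intervalIntegrable_const (hint _ _)
      (fun x hx => hmono hx.1)
    simpa using this
  have h3 := hadd 1 r
  have h0 : 0 ≤ ∫ s in (0:ℝ)..(1:ℝ), ρ s := by simpa using hmonoI 0 1 zero_le_one
  have : (r - 1) * ρ 1 = |M| + 1 := by
    rw [hrdef]; field_simp; ring
  nlinarith [abs_nonneg M, le_abs_self M]

/-- remark after Definition 2.3: a continuous, strictly convex stage cost on
a convex compact constraint set whose unique global minimiser is an equilibrium yields strict
dissipativity with the zero storage function. -/
theorem stmt18 {n m : ℕ} (f : Vec n × Vec m → Vec n) (hf : Continuous f)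
    (Y : Set (Vec n × Vec m)) (hYconv : Convex ℝ Y) (hYcomp : IsCompact Y)
    (ℓ : Vec n × Vec m → ℝ) (hℓcont : ContinuousOn ℓ Y)
    (hℓconv : StrictConvexOn ℝ Y ℓ)
    (xs : Vec n) (us : Vec m) (hmem : (xs, us) ∈ Y)
    (hmin : ∀ z ∈ Y, z ≠ (xs, us) → ℓ (xs, us) < ℓ z)
    (heq : f (xs, us) = xs) :
    ∃ α : ℝ → ℝ, KInf α ∧
      (∀ z ∈ Y, ℓ z - ℓ (xs, us) ≥ α ‖z.1 - xs‖) ∧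
      StrictDissipativeWith f Y ℓ xs us (fun _ => 0) α := by
  classical
  have hnnℓ : ∀ z ∈ Y, 0 ≤ ℓ z - ℓ (xs, us) := by
    intro z hz
    rcases eq_or_ne z (xs, us) with h | h
    · simp [h]
    · linarith [hmin z hz h]
  have hzero_bdd : BddOnBddSubsets (stateSet Y) (fun _ => (0:ℝ)) := by
    intro S _ _
    exact (isBounded_singleton (x := (0:ℝ))).subset
      (by rintro y ⟨x, _, rfl⟩; simp)
  have hzero_bb : BddBelow ((fun _ => (0:ℝ)) '' stateSet Y) :=
    ⟨0, by rintro y ⟨x, _, rfl⟩; exact le_refl 0⟩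
  have hD : Continuous (fun z : Vec n × Vec m => ‖z.1 - xs‖) :=
    (continuous_fst.sub continuous_const).norm
  obtain ⟨zR, hzR, hzRmax⟩ := hYcomp.exists_isMaxOn ⟨_, hmem⟩ hD.continuousOn
  have hRle : ∀ z ∈ Y, ‖z.1 - xs‖ ≤ ‖zR.1 - xs‖ := fun z hz => hzRmax hz
  rcases eq_or_lt_of_le (norm_nonneg (zR.1 - xs)) with hReq | hRpos
  · -- degenerate case: all states equal xs
    obtain ⟨hK, _⟩ := kinf_primitive (fun _ => 1) monotone_const
      (fun _ => zero_le_one) (fun _ _ => one_pos) 1 (fun _ => le_refl 1)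
    have hineq : ∀ z ∈ Y, ℓ z - ℓ (xs, us) ≥ (fun r => ∫ s in (0:ℝ)..r, (1:ℝ)) ‖z.1 - xs‖ := by
      intro z hz
      have h1 : ‖z.1 - xs‖ ≤ 0 := hReq ▸ hRle z hz
      have h2 : ‖z.1 - xs‖ = 0 := le_antisymm h1 (norm_nonneg _)
      simp only [h2]
      simpa using hnnℓ z hz
    exact ⟨_, hK, hineq, ⟨hmem, heq, hzero_bdd, hK,
      fun z hz _ => by simpa using hineq z hz⟩, hzero_bb⟩
  · set R := ‖zR.1 - xs‖ with hRdef
    set M := max R 1 with hMdef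
    have hM1 : (1:ℝ) ≤ M := le_max_right _ _
    have hMpos : (0:ℝ) < M := lt_of_lt_of_le one_pos hM1
    set A : ℝ → Set (Vec n × Vec m) :=
      fun s => Y ∩ {z | min (max s 0) R ≤ ‖z.1 - xs‖} with hAdef
    set g : ℝ → ℝ := fun s => sInf ((fun z => ℓ z - ℓ (xs, us)) '' A s) with hgdef
    have hzRA : ∀ s, zR ∈ A s := by
      intro s
      refine ⟨hzR, ?_⟩
      show min (max s 0) R ≤ ‖zR.1 - xs‖
      rw [← hRdef]
      exact min_le_right _ _
    have hne : ∀ s, ((fun z => ℓ z - ℓ (xs, us)) '' A s).Nonempty :=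
      fun s => ⟨_, zR, hzRA s, rfl⟩
    have hbdd : ∀ s, BddBelow ((fun z => ℓ z - ℓ (xs, us)) '' A s) := by
      intro s
      exact ⟨0, by rintro y ⟨z, hz, rfl⟩; exact hnnℓ z hz.1⟩
    have hgmono : Monotone g := by
      intro s t hst
      apply csInf_le_csInf (hbdd s) (hne t)
      apply Set.image_mono
      intro z hz
      exact ⟨hz.1, le_trans (min_le_min (max_le_max hst (le_refl 0)) (le_refl R)) hz.2⟩
    have hgnn : ∀ s, 0 ≤ g s := by
      intro s
      apply le_csInf (hne s)
      rintro y ⟨z, hz, rfl⟩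
      exact hnnℓ z hz.1
    have hgbd : ∀ s, g s ≤ ℓ zR - ℓ (xs, us) :=
      fun s => csInf_le (hbdd s) ⟨zR, hzRA s, rfl⟩
    have hgpos : ∀ s, 0 < s → 0 < g s := by
      intro s hs
      have hr : 0 < min (max s 0) R := lt_min (lt_of_lt_of_le hs (le_max_left _ _)) hRpos
      have hAcomp : IsCompact (A s) :=
        hYcomp.inter_right (isClosed_le continuous_const hD)
      obtain ⟨w, hwA, hwmin⟩ := hAcomp.exists_isMinOn ⟨zR, hzRA s⟩
        (hℓcont.mono Set.inter_subset_left)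
      have hw1 : w.1 ≠ xs := by
        intro h
        have := hwA.2
        rw [Set.mem_setOf_eq, h, sub_self, norm_zero] at this
        linarith
      have hwne : w ≠ (xs, us) := fun h => hw1 (by rw [h])
      have hwpos : 0 < ℓ w - ℓ (xs, us) := by linarith [hmin w hwA.1 hwne]
      apply lt_of_lt_of_le hwpos
      apply le_csInf (hne s)
      rintro y ⟨z, hz, rfl⟩
      have := hwmin hz
      simpa using this
    set ρ : ℝ → ℝ := fun s => g s / M with hρdef
    have hρmono : Monotone ρ := by
      intro a b hab
      simp only [hρdef]
      gcongr
      exact hgmono hab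
    have hρnn : ∀ s, 0 ≤ ρ s := fun s => div_nonneg (hgnn s) hMpos.le
    have hρpos : ∀ s, 0 < s → 0 < ρ s := fun s hs => div_pos (hgpos s hs) hMpos
    have hρbd : ∀ s, ρ s ≤ (ℓ zR - ℓ (xs, us)) / M := by
      intro s
      simp only [hρdef]
      gcongr
      exact hgbd s
    obtain ⟨hK, hKle⟩ := kinf_primitive ρ hρmono hρnn hρpos _ hρbd
    have hineq : ∀ z ∈ Y,
        ℓ z - ℓ (xs, us) ≥ (fun r => ∫ s in (0:ℝ)..r, ρ s) ‖z.1 - xs‖ := by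
      intro z hz
      simp only
      set r := ‖z.1 - xs‖ with hr
      have hr0 : 0 ≤ r := norm_nonneg _
      have hrR : r ≤ R := hRle z hz
      have h1 : (∫ s in (0:ℝ)..r, ρ s) ≤ r * ρ r := hKle r hr0
      have h2 : g r ≤ ℓ z - ℓ (xs, us) := by
        apply csInf_le (hbdd r)
        refine ⟨z, ⟨hz, ?_⟩, rfl⟩
        show min (max r 0) R ≤ ‖z.1 - xs‖
        rw [max_eq_left hr0, min_eq_left hrR, ← hr]
      have h3 : r * ρ r ≤ g r := by
        have hrM : r ≤ M := le_trans hrR (le_max_left _ _)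
        have h4 : r * (g r / M) ≤ M * (g r / M) :=
          mul_le_mul_of_nonneg_right hrM (hρnn r)
        have h5 : M * (g r / M) = g r := by field_simp
        calc r * ρ r = r * (g r / M) := rfl
          _ ≤ M * (g r / M) := h4
          _ = g r := h5
      linarith
    exact ⟨_, hK, hineq, ⟨hmem, heq, hzero_bdd, hK,
      fun z hz _ => by simpa using hineq z hz⟩, hzero_bb⟩
end
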